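/- arXiv:2306.09007 — 8 statements merged into one kernel-verified Lean document; each statement's English description precedes it below -/
import Mathlib

section
/- Let V be an irreducible representation of G over k, let W be a nonzero proper H-subrepresentation of the restriction V|_H, and let g be an element of G not lying in H. Then V decomposes as the internal direct sum V = W ⊕ gW of H-subrepresentations, and both W and gW are irreducible as representations of H. -/
/-- Let `V` be an irreducible representation of `G` over `k`, let `W` be a
nonzero proper `H`-subrepresentation of the restriction `V|_H` (where `H` is a normal
subgroup of `G` of index 2), and let `g ∈ G` with `g ∉ H`. Then `V = W ⊕ gW` as an
internal direct sum of `H`-subrepresentations, and both `W` and `gW` are irreducible as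
representations of `H`. -/
theorem statement0 {k G V : Type*} [Field k] [Group G] [AddCommGroup V] [Module k V]
    (H : Subgroup G) [H.Normal] (hH : H.index = 2)
    (ρ : Representation k G V)
    (hirr : Nontrivial V ∧
      ∀ U : Submodule k V, (∀ g : G, ∀ v ∈ U, ρ g v ∈ U) → U = ⊥ ∨ U = ⊤)
    (W : Submodule k V) (hW0 : W ≠ ⊥) (hWt : W ≠ ⊤)
    (hstab : ∀ h ∈ H, ∀ v ∈ W, ρ h v ∈ W)
    (g : G) (hg : g ∉ H) :
    -- `gW` is again an `H`-subrepresentation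
    (∀ h ∈ H, ∀ v ∈ W.map (ρ g), ρ h v ∈ W.map (ρ g)) ∧
    -- `V = W ⊕ gW` as an internal direct sum
    IsCompl W (W.map (ρ g)) ∧
    -- `W` is irreducible as a representation of `H`
    (W ≠ ⊥ ∧ ∀ U : Submodule k V, U ≤ W →
        (∀ h ∈ H, ∀ v ∈ U, ρ h v ∈ U) → U = ⊥ ∨ U = W) ∧
    -- `gW` is irreducible as a representation of `H`
    (W.map (ρ g) ≠ ⊥ ∧ ∀ U : Submodule k V, U ≤ W.map (ρ g) →
        (∀ h ∈ H, ∀ v ∈ U, ρ h v ∈ U) → U = ⊥ ∨ U = W.map (ρ g)) := by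
  obtain ⟨hnt, hirr⟩ := hirr
  have hmul : ∀ a b : G, a * b ∈ H ↔ (a ∈ H ↔ b ∈ H) := fun a b =>
    Subgroup.mul_mem_iff_of_index_two hH
  have happ : ∀ (x y : G) (v : V), ρ x (ρ y v) = ρ (x * y) v := by
    intro x y v; rw [map_mul]; rfl
  have hginv : g⁻¹ ∉ H := fun h => hg (by simpa using H.inv_mem h)
  have hNorm : H.Normal := inferInstance
  -- `gU` is H-stable whenever `U` is
  have hstabMap : ∀ (U : Submodule k V), (∀ h ∈ H, ∀ v ∈ U, ρ h v ∈ U) →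
      ∀ h ∈ H, ∀ v ∈ U.map (ρ g), ρ h v ∈ U.map (ρ g) := by
    intro U hU h hh v hv
    obtain ⟨w, hw, rfl⟩ := hv
    refine ⟨ρ (g⁻¹ * h * g) w, hU _ (by simpa using hNorm.conj_mem h hh g⁻¹) w hw, ?_⟩
    rw [happ, happ]; congr 1; group
  -- `U ⊔ gU` is G-stable whenever `U` is H-stable
  have hsupStable : ∀ (U : Submodule k V), (∀ h ∈ H, ∀ v ∈ U, ρ h v ∈ U) →
      ∀ x : G, ∀ v ∈ U ⊔ U.map (ρ g), ρ x v ∈ U ⊔ U.map (ρ g) := by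
    intro U hU x
    have key : U ⊔ U.map (ρ g) ≤ Submodule.comap (ρ x) (U ⊔ U.map (ρ g)) := by
      by_cases hx : x ∈ H
      · refine sup_le (fun w hw => ?_) (fun w hw => ?_)
        · exact Submodule.mem_comap.mpr (Submodule.mem_sup_left (hU x hx w hw))
        · exact Submodule.mem_comap.mpr (Submodule.mem_sup_right (hstabMap U hU x hx w hw))
      · refine sup_le (fun w hw => ?_) (fun w hw => ?_)
        · refine Submodule.mem_comap.mpr (Submodule.mem_sup_right ?_)
          refine ⟨ρ (g⁻¹ * x) w, hU _ ((hmul g⁻¹ x).mpr (iff_of_false hginv hx)) w hw, ?_⟩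
          rw [happ]; congr 1; group
        · obtain ⟨u, hu, rfl⟩ := hw
          refine Submodule.mem_comap.mpr (Submodule.mem_sup_left ?_)
          rw [happ]
          exact hU _ ((hmul x g).mpr (iff_of_false hx hg)) u hu
    exact fun v hv => key hv
  -- `W ⊓ gW` is G-stable
  have hinfStable : ∀ x : G, ∀ v ∈ W ⊓ W.map (ρ g), ρ x v ∈ W ⊓ W.map (ρ g) := by
    intro x v hv
    obtain ⟨hv1, hv2⟩ := hv
    by_cases hx : x ∈ H
    · exact ⟨hstab x hx v hv1, hstabMap W hstab x hx v hv2⟩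
    · constructor
      · obtain ⟨u, hu, rfl⟩ := hv2
        rw [happ]
        exact hstab _ ((hmul x g).mpr (iff_of_false hx hg)) u hu
      · refine ⟨ρ (g⁻¹ * x) v, hstab _ ((hmul g⁻¹ x).mpr (iff_of_false hginv hx)) v hv1, ?_⟩
        rw [happ]; congr 1; group
  have hsup : W ⊔ W.map (ρ g) = ⊤ := by
    rcases hirr _ (hsupStable W hstab) with h | h
    · exact absurd (eq_bot_iff.mpr (le_sup_left.trans h.le)) hW0
    · exact h
  have hinf : W ⊓ W.map (ρ g) = ⊥ := by
    rcases hirr _ hinfStable with h | h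
    · exact h
    · exact absurd (top_unique (h ▸ inf_le_left)) hWt
  -- irreducibility of W
  have hWirr : ∀ U : Submodule k V, U ≤ W →
      (∀ h ∈ H, ∀ v ∈ U, ρ h v ∈ U) → U = ⊥ ∨ U = W := by
    intro U hUW hU
    rcases hirr _ (hsupStable U hU) with h | h
    · left; exact eq_bot_iff.mpr (le_sup_left.trans h.le)
    · right
      have hz : U.map (ρ g) ⊓ W = ⊥ := by
        refine le_bot_iff.mp ?_
        calc U.map (ρ g) ⊓ W ≤ W.map (ρ g) ⊓ W :=
              inf_le_inf_right _ (Submodule.map_mono hUW)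
          _ = ⊥ := by rw [inf_comm]; exact hinf
      have : (U ⊔ U.map (ρ g)) ⊓ W = W := by rw [h, top_inf_eq]
      rwa [sup_inf_assoc_of_le _ hUW, hz, sup_bot_eq] at this
  -- basic facts about maps
  have hmapmap : ∀ (a b : G) (U : Submodule k V),
      (U.map (ρ b)).map (ρ a) = U.map (ρ (a * b)) := by
    intro a b U
    rw [← Submodule.map_comp, ← Module.End.mul_eq_comp, ← map_mul]
  have hmapone : ∀ U : Submodule k V, U.map (ρ 1) = U := by
    intro U; rw [map_one, Module.End.one_eq_id, Submodule.map_id]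
  have hgg' : ∀ U : Submodule k V, (U.map (ρ g)).map (ρ g⁻¹) = U := by
    intro U; rw [hmapmap, inv_mul_cancel, hmapone]
  have hgg : ∀ U : Submodule k V, (U.map (ρ g⁻¹)).map (ρ g) = U := by
    intro U; rw [hmapmap, mul_inv_cancel, hmapone]
  have hgW0 : W.map (ρ g) ≠ ⊥ := by
    intro h
    apply hW0
    have := congrArg (Submodule.map (ρ g⁻¹)) h
    rwa [hgg', Submodule.map_bot] at this
  refine ⟨hstabMap W hstab, ⟨disjoint_iff.mpr hinf, codisjoint_iff.mpr hsup⟩,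
    ⟨hW0, hWirr⟩, hgW0, ?_⟩
  -- irreducibility of gW
  intro U hUgW hU
  have hU'W : U.map (ρ g⁻¹) ≤ W := by
    have := Submodule.map_mono (f := ρ g⁻¹) hUgW
    rwa [hgg'] at this
  have hU'stab : ∀ h ∈ H, ∀ v ∈ U.map (ρ g⁻¹), ρ h v ∈ U.map (ρ g⁻¹) := by
    intro h hh v hv
    obtain ⟨u, hu, rfl⟩ := hv
    refine ⟨ρ (g * h * g⁻¹) u, hU _ (hNorm.conj_mem h hh g) u hu, ?_⟩
    rw [happ, happ]; congr 1; group
  rcases hWirr _ hU'W hU'stab with h | h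
  · left
    have := congrArg (Submodule.map (ρ g)) h
    rwa [hgg, Submodule.map_bot] at this
  · right
    have := congrArg (Submodule.map (ρ g)) h
    rwa [hgg] at this
end

section
/- If V is an irreducible representation of G over k, then either the restriction V|_H is an irreducible representation of H, or there exist two irreducible H-subrepresentations W₁ and W₂ of V|_H such that V = W₁ ⊕ W₂ as an internal direct sum of H-representations. -/
/-- If `V` is an irreducible representation of `G` over `k` and `H` is a
normal subgroup of `G` of index 2, then either the restriction `V|_H` is irreducible as a
representation of `H`, or there exist two irreducible `H`-subrepresentations `W₁`, `W₂`
of `V|_H` such that `V = W₁ ⊕ W₂` as an internal direct sum of `H`-representations. -/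
theorem statement2 {k G V : Type*} [Field k] [Group G] [AddCommGroup V] [Module k V]
    (H : Subgroup G) [H.Normal] (hH : H.index = 2)
    (ρ : Representation k G V)
    (hirr : Nontrivial V ∧
      ∀ U : Submodule k V, (∀ g : G, ∀ v ∈ U, ρ g v ∈ U) → U = ⊥ ∨ U = ⊤) :
    -- either the restriction to `H` is irreducible
    (Nontrivial V ∧
      ∀ U : Submodule k V, (∀ h ∈ H, ∀ v ∈ U, ρ h v ∈ U) → U = ⊥ ∨ U = ⊤) ∨
    -- or `V` is the internal direct sum of two irreducible `H`-subrepresentations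
    (∃ W₁ W₂ : Submodule k V,
      (∀ h ∈ H, ∀ v ∈ W₁, ρ h v ∈ W₁) ∧
      (∀ h ∈ H, ∀ v ∈ W₂, ρ h v ∈ W₂) ∧
      IsCompl W₁ W₂ ∧
      (W₁ ≠ ⊥ ∧ ∀ U : Submodule k V, U ≤ W₁ →
          (∀ h ∈ H, ∀ v ∈ U, ρ h v ∈ U) → U = ⊥ ∨ U = W₁) ∧
      (W₂ ≠ ⊥ ∧ ∀ U : Submodule k V, U ≤ W₂ →
          (∀ h ∈ H, ∀ v ∈ U, ρ h v ∈ U) → U = ⊥ ∨ U = W₂)) := by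
  obtain ⟨hnt, hGirr⟩ := hirr
  by_cases hres : ∀ U : Submodule k V, (∀ h ∈ H, ∀ v ∈ U, ρ h v ∈ U) → U = ⊥ ∨ U = ⊤
  · exact Or.inl ⟨hnt, hres⟩
  right
  push_neg at hres
  obtain ⟨W, hWstab, hWbot, hWtop⟩ := hres
  -- pick g ∉ H
  have hHne : H ≠ ⊤ := by
    intro h
    rw [h, Subgroup.index_top] at hH
    omega
  obtain ⟨g, hg⟩ : ∃ g, g ∉ H := by
    by_contra h
    push_neg at h
    exact hHne ((Subgroup.eq_top_iff' H).2 h)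
  have hmul : ∀ a b : G, ∀ v : V, ρ a (ρ b v) = ρ (a * b) v := by
    intro a b v; rw [map_mul]; rfl
  have hmul2 : ∀ a b : G, a ∉ H → b ∉ H → a * b ∈ H := by
    intro a b ha hb
    rw [Subgroup.mul_mem_iff_of_index_two hH]
    exact ⟨fun h => absurd h ha, fun h => absurd h hb⟩
  have hginv : g⁻¹ ∉ H := fun hm => hg (by simpa using H.inv_mem hm)
  -- H-stability of the image of an H-stable submodule
  have stabMap : ∀ (U : Submodule k V), (∀ h ∈ H, ∀ v ∈ U, ρ h v ∈ U) →
      ∀ h ∈ H, ∀ v ∈ U.map (ρ g), ρ h v ∈ U.map (ρ g) := by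
    intro U hU h hh v hv
    obtain ⟨u, hu, rfl⟩ := hv
    have key : h * g = g * (g⁻¹ * h * g) := by group
    have hconj : g⁻¹ * h * g ∈ H := by
      have := (inferInstance : H.Normal).conj_mem h hh g⁻¹
      simpa using this
    rw [hmul, key, ← hmul]
    exact Submodule.mem_map_of_mem (hU _ hconj u hu)
  have crossTo : ∀ (U : Submodule k V), (∀ h ∈ H, ∀ v ∈ U, ρ h v ∈ U) →
      ∀ x : G, x ∉ H → ∀ v ∈ U, ρ x v ∈ U.map (ρ g) := by
    intro U hU x hx v hv
    have hmem : g⁻¹ * x ∈ H := hmul2 _ _ hginv hx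
    have key : x = g * (g⁻¹ * x) := by group
    rw [key, ← hmul]
    exact Submodule.mem_map_of_mem (hU _ hmem v hv)
  have crossFrom : ∀ (U : Submodule k V), (∀ h ∈ H, ∀ v ∈ U, ρ h v ∈ U) →
      ∀ x : G, x ∉ H → ∀ v ∈ U.map (ρ g), ρ x v ∈ U := by
    intro U hU x hx v hv
    obtain ⟨u, hu, rfl⟩ := hv
    rw [hmul]
    exact hU _ (hmul2 _ _ hx hg) u hu
  -- the span U ⊔ gU of a nonzero H-stable U is all of V
  have supTop : ∀ (U : Submodule k V), (∀ h ∈ H, ∀ v ∈ U, ρ h v ∈ U) →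
      U ≠ ⊥ → U ⊔ U.map (ρ g) = ⊤ := by
    intro U hU hUne
    have hstab : ∀ x : G, ∀ v ∈ U ⊔ U.map (ρ g), ρ x v ∈ U ⊔ U.map (ρ g) := by
      intro x v hv
      obtain ⟨u, hu, y, hy, rfl⟩ := Submodule.mem_sup.1 hv
      rw [map_add]
      by_cases hx : x ∈ H
      · exact add_mem (Submodule.mem_sup_left (hU x hx u hu))
          (Submodule.mem_sup_right (stabMap U hU x hx y hy))
      · exact add_mem (Submodule.mem_sup_right (crossTo U hU x hx u hu))
          (Submodule.mem_sup_left (crossFrom U hU x hx y hy))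
    rcases hGirr _ hstab with h | h
    · exact absurd (le_antisymm (h ▸ le_sup_left) bot_le) hUne
    · exact h
  set W₂ := W.map (ρ g) with hW₂
  have hW₂stab : ∀ h ∈ H, ∀ v ∈ W₂, ρ h v ∈ W₂ := stabMap W hWstab
  -- W ⊓ W₂ is G-stable, hence ⊥
  have hinf : W ⊓ W₂ = ⊥ := by
    have hstab : ∀ x : G, ∀ v ∈ W ⊓ W₂, ρ x v ∈ W ⊓ W₂ := by
      intro x v hv
      by_cases hx : x ∈ H
      · exact ⟨hWstab x hx v hv.1, hW₂stab x hx v hv.2⟩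
      · exact ⟨crossFrom W hWstab x hx v hv.2, crossTo W hWstab x hx v hv.1⟩
    rcases hGirr _ hstab with h | h
    · exact h
    · exact absurd (le_antisymm le_top (h ▸ inf_le_left)) hWtop
  have hsup : W ⊔ W₂ = ⊤ := supTop W hWstab hWbot
  -- W₂ ≠ ⊥
  have hW₂ne : W₂ ≠ ⊥ := by
    intro h
    apply hWbot
    rw [Submodule.eq_bot_iff] at h ⊢
    intro w hw
    have : ρ g w = 0 := h _ (Submodule.mem_map_of_mem hw)
    have := congrArg (ρ g⁻¹) this
    rw [hmul] at this
    simpa using this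
  -- map of W₂ under g lands back in W
  have hW₂back : ∀ v ∈ W₂, ρ g v ∈ W := by
    intro v hv
    obtain ⟨w, hw, rfl⟩ := hv
    rw [hmul]
    exact hWstab _ (hmul2 _ _ hg hg) w hw
  refine ⟨W, W₂, hWstab, hW₂stab, ⟨disjoint_iff.2 hinf, codisjoint_iff.2 hsup⟩, ⟨hWbot, ?_⟩,
    ⟨hW₂ne, ?_⟩⟩
  · -- W is H-irreducible
    intro U hUle hUstab
    by_cases hU : U = ⊥
    · exact Or.inl hU
    right
    have htop := supTop U hUstab hU
    refine le_antisymm hUle fun w hw => ?_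
    have hw' : w ∈ U ⊔ U.map (ρ g) := htop ▸ Submodule.mem_top
    obtain ⟨u, hu, y, hy, heq⟩ := Submodule.mem_sup.1 hw'
    have hyW₂ : y ∈ W₂ := Submodule.map_mono hUle hy
    have hyW : y ∈ W := by
      have : y = w - u := by rw [← heq]; abel
      rw [this]; exact sub_mem hw (hUle hu)
    have hy0 : y = 0 := by
      have : y ∈ W ⊓ W₂ := ⟨hyW, hyW₂⟩
      rwa [hinf, Submodule.mem_bot] at this
    rw [← heq, hy0, add_zero]
    exact hu
  · -- W₂ is H-irreducible
    intro U hUle hUstab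
    by_cases hU : U = ⊥
    · exact Or.inl hU
    right
    have htop := supTop U hUstab hU
    refine le_antisymm hUle fun w hw => ?_
    have hw' : w ∈ U ⊔ U.map (ρ g) := htop ▸ Submodule.mem_top
    obtain ⟨u, hu, y, hy, heq⟩ := Submodule.mem_sup.1 hw'
    have hyW : y ∈ W := by
      obtain ⟨u', hu', rfl⟩ := hy
      exact hW₂back u' (hUle hu')
    have hyW₂ : y ∈ W₂ := by
      have : y = w - u := by rw [← heq]; abel
      rw [this]; exact sub_mem hw (hUle hu)
    have hy0 : y = 0 := by
      have : y ∈ W ⊓ W₂ := ⟨hyW, hyW₂⟩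
      rwa [hinf, Submodule.mem_bot] at this
    rw [← heq, hy0, add_zero]
    exact hu
end

section
/- Let σ be an irreducible representation of H over k and suppose that Ind_H^G σ decomposes as an internal direct sum ρ₁ ⊕ ρ₂ of two nonzero G-subrepresentations. Then ρ₁ and ρ₂ are irreducible representations of G, and the restrictions ρ₁|_H and ρ₂|_H are both isomorphic to σ as representations of H. -/
variable {k : Type*} [Field k] {G : Type*} [Group G] (H : Subgroup G)
  {W : Type*} [AddCommGroup W] [Module k W]

/-- The underlying space of the induced representation `Ind_H^G σ = k[G] ⊗_{k[H]} W`
(`H` of finite index): functions `f : G → W` with `f (x * h) = σ h⁻¹ (f x)` for `h ∈ H`.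
For a finite-index subgroup this function model realizes the induced representation. -/
def indSupport (σ : Representation k H W) : Submodule k (G → W) where
  carrier := {f | ∀ (h : H) (x : G), f (x * (h : G)) = σ h⁻¹ (f x)}
  add_mem' := by
    intro a b ha hb h x
    simp only [Pi.add_apply, ha h x, hb h x, map_add]
  zero_mem' := by
    intro h x
    simp
  smul_mem' := by
    intro c f hf h x
    simp only [Pi.smul_apply, hf h x, map_smul]

/-- The action of `g : G` on the induced representation, by right translation. -/
def indAct (σ : Representation k H W) (g : G) :
    indSupport H σ →ₗ[k] indSupport H σ where
  toFun f := ⟨fun x => (f : G → W) (g⁻¹ * x), by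
    intro h x
    simpa [mul_assoc] using f.2 h (g⁻¹ * x)⟩
  map_add' f₁ f₂ := rfl
  map_smul' c f := rfl

/-- The induced representation `Ind_H^G σ` of `σ : Representation k H W`. -/
def indRep (σ : Representation k H W) : Representation k G ↥(indSupport H σ) where
  toFun := indAct H σ
  map_one' := by
    ext f x
    simp [indAct]
  map_mul' g₁ g₂ := by
    ext f x
    simp [indAct, mul_assoc]

/-- Evaluation at a point, as linear map. -/
def evAt (σ : Representation k H W) (t : G) : ↥(indSupport H σ) →ₗ[k] W where
  toFun f := (f : G → W) t
  map_add' _ _ := rfl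
  map_smul' _ _ := rfl

lemma indRep_coe (σ : Representation k H W) (g : G) (f : ↥(indSupport H σ)) (x : G) :
    ((indRep H σ g f : ↥(indSupport H σ)) : G → W) x = (f : G → W) (g⁻¹ * x) := rfl

theorem aux_main [H.Normal] (hH : H.index = 2)
    (σ : Representation k H W)
    (hσ2 : ∀ U : Submodule k W, (∀ h : H, ∀ w ∈ U, σ h w ∈ U) → U = ⊥ ∨ U = ⊤)
    (ρ : Submodule k ↥(indSupport H σ))
    (hρ : ∀ g : G, ∀ f ∈ ρ, indRep H σ g f ∈ ρ)
    (hbot : ρ ≠ ⊥) (htop : ρ ≠ ⊤) :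
    (∀ U : Submodule k ↥(indSupport H σ), U ≤ ρ →
        (∀ g : G, ∀ f ∈ U, indRep H σ g f ∈ U) → U = ⊥ ∨ U = ρ) ∧
    (∃ ι : W →ₗ[k] ↥(indSupport H σ), Function.Injective ι ∧ LinearMap.range ι = ρ ∧
        ∀ (h : H) (w : W), ι (σ h w) = indRep H σ (h : G) (ι w)) := by
  classical
  -- choose t ∉ H
  obtain ⟨t, ht⟩ : ∃ t : G, t ∉ H := by
    by_contra hc
    push_neg at hc
    have : H = ⊤ := by rw [Subgroup.eq_top_iff']; exact hc
    rw [this, Subgroup.index_top] at hH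
    omega
  have htinv : t⁻¹ ∉ H := fun h => ht (by simpa using inv_mem h)
  have key : ∀ x : G, x ∉ H → t⁻¹ * x ∈ H := by
    intro x hx
    rw [Subgroup.mul_mem_iff_of_index_two hH]
    simp [htinv, hx]
  -- basic facts
  have hprop : ∀ (f : ↥(indSupport H σ)) (x : G) (h : H),
      (f : G → W) (x * (h : G)) = σ h⁻¹ ((f : G → W) x) := fun f x h => f.2 h x
  -- vanishing on H from value at 1
  have hvanH : ∀ (f : ↥(indSupport H σ)), (f : G → W) 1 = 0 →
      ∀ x : G, x ∈ H → (f : G → W) x = 0 := by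
    intro f hf1 x hx
    have := hprop f 1 ⟨x, hx⟩
    rw [one_mul] at this
    rw [this, hf1, map_zero]
  have hvanT : ∀ (f : ↥(indSupport H σ)), (f : G → W) t = 0 →
      ∀ x : G, x ∉ H → (f : G → W) x = 0 := by
    intro f hft x hx
    have hmem := key x hx
    have hx' : x = t * (⟨t⁻¹ * x, hmem⟩ : H) := by simp
    rw [hx', hprop f t, hft, map_zero]
  have heqzero : ∀ (f : ↥(indSupport H σ)), (f : G → W) 1 = 0 → (f : G → W) t = 0 → f = 0 := by
    intro f h1 h2
    ext x
    by_cases hx : x ∈ H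
    · exact hvanH f h1 x hx
    · exact hvanT f h2 x hx
  -- equivariance of evaluations
  have hev1 : ∀ (h : H) (f : ↥(indSupport H σ)),
      evAt H σ 1 (indRep H σ (h : G) f) = σ h (evAt H σ 1 f) := by
    intro h f
    show (f : G → W) ((h : G)⁻¹ * 1) = σ h ((f : G → W) 1)
    have := hprop f 1 h⁻¹
    rw [one_mul] at this
    rw [mul_one, ← Subgroup.coe_inv, this, inv_inv]
  -- ev at t of the conjugated action
  have hevt : ∀ (h : H) (f : ↥(indSupport H σ)),
      evAt H σ t (indRep H σ (t * (h : G) * t⁻¹) f) = σ h (evAt H σ t f) := by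
    intro h f
    show (f : G → W) ((t * (h : G) * t⁻¹)⁻¹ * t) = σ h ((f : G → W) t)
    have : (t * (h : G) * t⁻¹)⁻¹ * t = t * ((h⁻¹ : H) : G) := by
      simp [mul_assoc]
    rw [this, hprop f t h⁻¹, inv_inv]
  -- evaluation at t equals evaluation at 1 after moving by t⁻¹
  have hevt1 : ∀ f : ↥(indSupport H σ), evAt H σ t f = evAt H σ 1 (indRep H σ t⁻¹ f) := by
    intro f
    show (f : G → W) t = (f : G → W) (t⁻¹⁻¹ * 1)
    rw [inv_inv, mul_one]
  -- ev image of ρ is everything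
  have himg : Submodule.map (evAt H σ 1) ρ = ⊤ := by
    have hst : ∀ h : H, ∀ w ∈ Submodule.map (evAt H σ 1) ρ,
        σ h w ∈ Submodule.map (evAt H σ 1) ρ := by
      rintro h w ⟨f, hf, rfl⟩
      exact ⟨indRep H σ (h : G) f, hρ _ f hf, hev1 h f⟩
    rcases hσ2 (Submodule.map (evAt H σ 1) ρ) hst with h | h
    · exfalso
      apply hbot
      rw [Submodule.eq_bot_iff] at h ⊢
      intro f hf
      apply heqzero f
      · exact h _ ⟨f, hf, rfl⟩
      · have := h _ ⟨indRep H σ t⁻¹ f, hρ t⁻¹ f hf, rfl⟩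
        rw [← hevt1 f] at this
        exact this
    · exact h
  -- injectivity of ev on ρ
  have hinj : ∀ f ∈ ρ, evAt H σ 1 f = 0 → f = 0 := by
    by_contra hc
    push_neg at hc
    obtain ⟨f₀, hf₀ρ, hf₀1, hf₀ne⟩ := hc
    -- K = ρ ⊓ ker (evAt 1)
    set K := ρ ⊓ LinearMap.ker (evAt H σ 1) with hK
    have hf₀K : f₀ ∈ K := ⟨hf₀ρ, hf₀1⟩
    have hKH : ∀ (h : H), ∀ f ∈ K, indRep H σ (h : G) f ∈ K := by
      rintro h f ⟨hfρ, hfk⟩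
      refine ⟨hρ _ f hfρ, ?_⟩
      show evAt H σ 1 _ = 0
      rw [hev1 h f]
      have hfk' : evAt H σ 1 f = 0 := hfk
      rw [hfk', map_zero]
    -- image of K under ev at t is everything
    have himgK : Submodule.map (evAt H σ t) K = ⊤ := by
      have hst : ∀ h : H, ∀ w ∈ Submodule.map (evAt H σ t) K,
          σ h w ∈ Submodule.map (evAt H σ t) K := by
        rintro h w ⟨f, hf, rfl⟩
        have hmem : t * (h : G) * t⁻¹ ∈ H := Subgroup.Normal.conj_mem ‹H.Normal› _ h.2 t
        refine ⟨indRep H σ (t * (h : G) * t⁻¹) f, ?_, hevt h f⟩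
        have heq : (t * (h : G) * t⁻¹) = ((⟨t * (h : G) * t⁻¹, hmem⟩ : H) : G) := rfl
        rw [heq]
        exact hKH _ f hf
      rcases hσ2 (Submodule.map (evAt H σ t) K) hst with h | h
      · exfalso
        apply hf₀ne
        apply heqzero f₀ hf₀1
        rw [Submodule.eq_bot_iff] at h
        exact h _ ⟨f₀, hf₀K, rfl⟩
      · exact h
    -- then ker ev ≤ ρ
    have hker : LinearMap.ker (evAt H σ 1) ≤ ρ := by
      intro f hf
      have : evAt H σ t f ∈ Submodule.map (evAt H σ t) K := by rw [himgK]; trivial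
      obtain ⟨g, hgK, hg⟩ := this
      have : f - g = 0 := by
        apply heqzero
        · show evAt H σ 1 (f - g) = 0
          have hf' : evAt H σ 1 f = 0 := hf
          have hg' : evAt H σ 1 g = 0 := hgK.2
          rw [map_sub, hf', hg', sub_zero]
        · show evAt H σ t (f - g) = 0
          rw [map_sub, hg, sub_self]
      have : f = g := by rwa [sub_eq_zero] at this
      rw [this]
      exact hgK.1
    -- also ker of ev at t ≤ ρ
    have hkert : LinearMap.ker (evAt H σ t) ≤ ρ := by
      intro f hf
      have h1 : indRep H σ t⁻¹ f ∈ LinearMap.ker (evAt H σ 1) := by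
        have hf' : evAt H σ t f = 0 := hf
        show evAt H σ 1 _ = 0
        rw [← hevt1]
        exact hf'
      have hmem := hρ t (indRep H σ t⁻¹ f) (hker h1)
      have heq : indRep H σ t (indRep H σ t⁻¹ f) = f := by
        ext x
        show (f : G → W) (t⁻¹⁻¹ * (t⁻¹ * x)) = (f : G → W) x
        rw [inv_inv, ← mul_assoc, mul_inv_cancel, one_mul]
      rwa [heq] at hmem
    -- splitting: every f is in ρ
    apply htop
    rw [eq_top_iff]
    intro f _
    -- f₁ := f restricted to complement of H
    have hf₁mem : (fun x => if x ∈ H then 0 else (f : G → W) x) ∈ indSupport H σ := by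
      intro h x
      by_cases hx : x ∈ H
      · simp only [hx, mul_mem_cancel_right h.2, if_true, map_zero]
      · have hxh : x * (h : G) ∉ H := fun hm => hx (by
          have := mul_mem hm (inv_mem h.2)
          simpa [mul_assoc] using this)
        simp only [hx, hxh, if_false]
        exact hprop f x h
    set f₁ : ↥(indSupport H σ) := ⟨_, hf₁mem⟩ with hf₁
    have hf₁ker : f₁ ∈ LinearMap.ker (evAt H σ 1) := by
      simp only [LinearMap.mem_ker]
      show (if (1:G) ∈ H then 0 else (f : G → W) 1) = 0
      simp [one_mem]
    have hf₀kert : f - f₁ ∈ LinearMap.ker (evAt H σ t) := by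
      simp only [LinearMap.mem_ker]
      show (f : G → W) t - (if t ∈ H then 0 else (f : G → W) t) = 0
      simp [ht]
    have : f = (f - f₁) + f₁ := by abel
    rw [this]
    exact add_mem (hkert hf₀kert) (hker hf₁ker)
  -- ev on ρ distinguishes elements
  have hinj' : ∀ f ∈ ρ, ∀ g ∈ ρ, evAt H σ 1 f = evAt H σ 1 g → f = g := by
    intro f hf g hg hfg
    have : f - g = 0 := hinj _ (sub_mem hf hg) (by rw [map_sub, hfg, sub_self])
    rwa [sub_eq_zero] at this
  constructor
  · -- irreducibility
    intro U hUρ hUG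
    by_cases hU : U = ⊥
    · exact Or.inl hU
    right
    have himgU : Submodule.map (evAt H σ 1) U = ⊤ := by
      have hst : ∀ h : H, ∀ w ∈ Submodule.map (evAt H σ 1) U,
          σ h w ∈ Submodule.map (evAt H σ 1) U := by
        rintro h w ⟨f, hf, rfl⟩
        exact ⟨indRep H σ (h : G) f, hUG _ f hf, hev1 h f⟩
      rcases hσ2 (Submodule.map (evAt H σ 1) U) hst with h | h
      · exfalso
        apply hU
        rw [Submodule.eq_bot_iff] at h ⊢
        intro f hf
        apply heqzero f
        · exact h _ ⟨f, hf, rfl⟩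
        · have := h _ ⟨indRep H σ t⁻¹ f, hUG t⁻¹ f hf, rfl⟩
          rw [← hevt1 f] at this
          exact this
      · exact h
    apply le_antisymm hUρ
    intro f hf
    have : evAt H σ 1 f ∈ Submodule.map (evAt H σ 1) U := by rw [himgU]; trivial
    obtain ⟨g, hgU, hg⟩ := this
    rw [hinj' f hf g (hUρ hgU) hg.symm]
    exact hgU
  · -- the intertwiner
    have hbij : Function.Bijective ((evAt H σ 1).comp ρ.subtype) := by
      constructor
      · intro ⟨f, hf⟩ ⟨g, hg⟩ hfg
        exact Subtype.ext (hinj' f hf g hg hfg)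
      · intro w
        have : w ∈ Submodule.map (evAt H σ 1) ρ := by rw [himg]; trivial
        obtain ⟨f, hf, hfw⟩ := this
        exact ⟨⟨f, hf⟩, hfw⟩
    let e : ↥ρ ≃ₗ[k] W := LinearEquiv.ofBijective _ hbij
    refine ⟨ρ.subtype.comp (e.symm : W →ₗ[k] ↥ρ), ?_, ?_, ?_⟩
    · exact Subtype.val_injective.comp e.symm.injective
    · rw [LinearMap.range_comp, LinearEquiv.range, Submodule.map_top, Submodule.range_subtype]
    · intro h w
      have hmem1 : (ρ.subtype.comp (e.symm : W →ₗ[k] ↥ρ)) (σ h w) ∈ ρ := (e.symm (σ h w)).2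
      have hmem2 : indRep H σ (h : G) ((ρ.subtype.comp (e.symm : W →ₗ[k] ↥ρ)) w) ∈ ρ :=
        hρ _ _ (e.symm w).2
      apply hinj' _ hmem1 _ hmem2
      have hval : ∀ v : W, evAt H σ 1 ((ρ.subtype.comp (e.symm : W →ₗ[k] ↥ρ)) v) = v := by
        intro v
        have := e.apply_symm_apply v
        exact this
      rw [hval]
      rw [hev1 h, hval]

/-- Let `σ` be an irreducible representation of `H` over `k` (`H` normal of
index 2 in `G`) and suppose that `Ind_H^G σ` decomposes as an internal direct sum
`ρ₁ ⊕ ρ₂` of two nonzero `G`-subrepresentations. Then `ρ₁` and `ρ₂` are irreducible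
representations of `G`, and the restrictions `ρ₁|_H` and `ρ₂|_H` are both isomorphic to
`σ` as representations of `H`. -/
theorem statement4 [H.Normal] (hH : H.index = 2)
    (σ : Representation k H W)
    (hσ : Nontrivial W ∧
      ∀ U : Submodule k W, (∀ h : H, ∀ w ∈ U, σ h w ∈ U) → U = ⊥ ∨ U = ⊤)
    (ρ₁ ρ₂ : Submodule k ↥(indSupport H σ))
    (h₁ : ∀ g : G, ∀ f ∈ ρ₁, indRep H σ g f ∈ ρ₁)
    (h₂ : ∀ g : G, ∀ f ∈ ρ₂, indRep H σ g f ∈ ρ₂)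
    (hne₁ : ρ₁ ≠ ⊥) (hne₂ : ρ₂ ≠ ⊥)
    (hcompl : IsCompl ρ₁ ρ₂) :
    -- `ρ₁` and `ρ₂` are irreducible over `G`
    (∀ U : Submodule k ↥(indSupport H σ), U ≤ ρ₁ →
        (∀ g : G, ∀ f ∈ U, indRep H σ g f ∈ U) → U = ⊥ ∨ U = ρ₁) ∧
    (∀ U : Submodule k ↥(indSupport H σ), U ≤ ρ₂ →
        (∀ g : G, ∀ f ∈ U, indRep H σ g f ∈ U) → U = ⊥ ∨ U = ρ₂) ∧
    -- `ρ₁|_H ≅ σ` as representations of `H`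
    (∃ ι : W →ₗ[k] ↥(indSupport H σ), Function.Injective ι ∧ LinearMap.range ι = ρ₁ ∧
        ∀ (h : H) (w : W), ι (σ h w) = indRep H σ (h : G) (ι w)) ∧
    -- `ρ₂|_H ≅ σ` as representations of `H`
    (∃ ι : W →ₗ[k] ↥(indSupport H σ), Function.Injective ι ∧ LinearMap.range ι = ρ₂ ∧
        ∀ (h : H) (w : W), ι (σ h w) = indRep H σ (h : G) (ι w)) := by
  have htop₁ : ρ₁ ≠ ⊤ := by
    intro h
    apply hne₂
    have := hcompl.inf_eq_bot
    rw [h, top_inf_eq] at this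
    exact this
  have htop₂ : ρ₂ ≠ ⊤ := by
    intro h
    apply hne₁
    have := hcompl.inf_eq_bot
    rw [h, inf_top_eq] at this
    exact this
  obtain ⟨hirr₁, hiso₁⟩ := aux_main H hH σ hσ.2 ρ₁ h₁ hne₁ htop₁
  obtain ⟨hirr₂, hiso₂⟩ := aux_main H hH σ hσ.2 ρ₂ h₂ hne₂ htop₂
  exact ⟨hirr₁, hirr₂, hiso₁, hiso₂⟩
end

section
/- Every irreducible representation σ of H over k is a direct summand of the restriction to H of some irreducible representation of G: there exist an irreducible G-representation ρ and an H-subrepresentation W of ρ|_H such that W is isomorphic to σ and W admits an H-stable complement in ρ. -/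
universe u

namespace St5

variable {k G W : Type u} [Field k] [Group G] [AddCommGroup W] [Module k W]
variable (H : Subgroup G) [H.Normal] (σ : Representation k H W) (g₀ : G)

lemma memA (g : G) (hg : g ∈ H) : g₀ * g * g₀⁻¹ ∈ H :=
  Subgroup.Normal.conj_mem ‹H.Normal› g hg g₀

omit [H.Normal] in
lemma memB1 (hH : H.index = 2) (hg₀ : g₀ ∉ H) {g : G} (hg : g ∉ H) : g * g₀⁻¹ ∈ H := by
  rw [Subgroup.mul_mem_iff_of_index_two hH]
  exact iff_of_false hg (fun h => hg₀ (by simpa using h))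

omit [H.Normal] in
lemma memB2 (hH : H.index = 2) (hg₀ : g₀ ∉ H) {g : G} (hg : g ∉ H) : g₀ * g ∈ H := by
  rw [Subgroup.mul_mem_iff_of_index_two hH]
  exact iff_of_false hg₀ hg

omit [H.Normal] in
lemma σmul' {a b c : G} (pa : a ∈ H) (pb : b ∈ H) (pc : c ∈ H) (h : c = a * b) (w : W) :
    σ ⟨c, pc⟩ w = σ ⟨a, pa⟩ (σ ⟨b, pb⟩ w) := by
  subst h
  have : (⟨a * b, pc⟩ : H) = ⟨a, pa⟩ * ⟨b, pb⟩ := rfl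
  rw [this, map_mul]; rfl

omit [H.Normal] in
lemma σcast {a : G} (pa : a ∈ H) (b : H) (h : a = (b : G)) (w : W) :
    σ ⟨a, pa⟩ w = σ b w := by
  have : (⟨a, pa⟩ : H) = b := Subtype.ext h
  rw [this]

variable (hH : H.index = 2) (hg₀ : g₀ ∉ H)

open Classical in
noncomputable def act (g : G) : W × W →ₗ[k] W × W :=
  if hg : g ∈ H then
    LinearMap.prodMap (σ ⟨g, hg⟩) (σ ⟨g₀ * g * g₀⁻¹, memA H g₀ g hg⟩)
  else
    LinearMap.prod
      ((σ ⟨g * g₀⁻¹, memB1 H g₀ hH hg₀ hg⟩).comp (LinearMap.snd k W W))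
      ((σ ⟨g₀ * g, memB2 H g₀ hH hg₀ hg⟩).comp (LinearMap.fst k W W))

lemma act_one : act H σ g₀ hH hg₀ 1 = LinearMap.id := by
  have h1 : (1 : G) ∈ H := one_mem H
  apply LinearMap.ext; rintro ⟨w₁, w₂⟩
  simp only [act, dif_pos h1, LinearMap.prodMap_apply, Prod.map_apply, LinearMap.id_coe, id]
  refine Prod.ext ?_ ?_ <;> dsimp
  · have : (⟨(1 : G), h1⟩ : H) = 1 := rfl
    rw [this, map_one]; rfl
  · have : (⟨g₀ * 1 * g₀⁻¹, memA H g₀ 1 h1⟩ : H) = 1 := Subtype.ext (by simp)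
    rw [this, map_one]; rfl

lemma act_mul (g g' : G) :
    act H σ g₀ hH hg₀ (g * g') =
      (act H σ g₀ hH hg₀ g).comp (act H σ g₀ hH hg₀ g') := by
  by_cases hg : g ∈ H <;> by_cases hg' : g' ∈ H
  · have hgg' : g * g' ∈ H := mul_mem hg hg'
    apply LinearMap.ext; rintro ⟨w₁, w₂⟩
    simp only [act, dif_pos hg, dif_pos hg', dif_pos hgg', LinearMap.comp_apply,
      LinearMap.prodMap_apply, Prod.map_apply]
    exact Prod.ext (σmul' H σ _ _ _ rfl w₁) (σmul' H σ _ _ _ (by group) w₂)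
  · have hgg' : g * g' ∉ H := fun h => hg' (((Subgroup.mul_mem_iff_of_index_two hH).mp h).mp hg)
    apply LinearMap.ext; rintro ⟨w₁, w₂⟩
    simp only [act, dif_pos hg, dif_neg hg', dif_neg hgg', LinearMap.comp_apply,
      LinearMap.prod_apply, LinearMap.prodMap_apply, Pi.prod, LinearMap.snd_apply,
      LinearMap.fst_apply, Prod.map_apply]
    exact Prod.ext (σmul' H σ _ _ _ (by group) w₂) (σmul' H σ _ _ _ (by group) w₁)
  · have hgg' : g * g' ∉ H := fun h => hg (((Subgroup.mul_mem_iff_of_index_two hH).mp h).mpr hg')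
    apply LinearMap.ext; rintro ⟨w₁, w₂⟩
    simp only [act, dif_neg hg, dif_pos hg', dif_neg hgg', LinearMap.comp_apply,
      LinearMap.prod_apply, LinearMap.prodMap_apply, Pi.prod, LinearMap.snd_apply,
      LinearMap.fst_apply, Prod.map_apply]
    exact Prod.ext (σmul' H σ _ _ _ (by group) w₂) (σmul' H σ _ _ _ (by group) w₁)
  · have hgg' : g * g' ∈ H := by
      rw [Subgroup.mul_mem_iff_of_index_two hH]; exact iff_of_false hg hg'
    apply LinearMap.ext; rintro ⟨w₁, w₂⟩
    simp only [act, dif_neg hg, dif_neg hg', dif_pos hgg', LinearMap.comp_apply,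
      LinearMap.prod_apply, LinearMap.prodMap_apply, Pi.prod, LinearMap.snd_apply,
      LinearMap.fst_apply, Prod.map_apply]
    exact Prod.ext (σmul' H σ _ _ _ (by group) w₁) (σmul' H σ _ _ _ (by group) w₂)

noncomputable def ρprod : Representation k G (W × W) where
  toFun := act H σ g₀ hH hg₀
  map_one' := act_one H σ g₀ hH hg₀
  map_mul' g g' := act_mul H σ g₀ hH hg₀ g g'

lemma ρprod_mem (h : G) (hh : h ∈ H) (w₁ w₂ : W) :
    ρprod H σ g₀ hH hg₀ h (w₁, w₂) = (σ ⟨h, hh⟩ w₁, σ ⟨g₀ * h * g₀⁻¹, memA H g₀ h hh⟩ w₂) := by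
  simp only [ρprod, MonoidHom.coe_mk, OneHom.coe_mk, act, dif_pos hh]
  rfl

lemma ρprod_notmem (g : G) (hg : g ∉ H) (w₁ w₂ : W) :
    ρprod H σ g₀ hH hg₀ g (w₁, w₂) =
      (σ ⟨g * g₀⁻¹, memB1 H g₀ hH hg₀ hg⟩ w₂, σ ⟨g₀ * g, memB2 H g₀ hH hg₀ hg⟩ w₁) := by
  simp only [ρprod, MonoidHom.coe_mk, OneHom.coe_mk, act, dif_neg hg]
  rfl

end St5

open St5

/-- Every irreducible representation `σ` of `H` over `k` (`H` normal of
index 2 in `G`) is a direct summand of the restriction to `H` of some irreducible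
representation of `G`: there exist an irreducible `G`-representation `ρ` and an
`H`-subrepresentation of `ρ|_H` which is isomorphic to `σ` and admits an `H`-stable
complement in `ρ`. -/
theorem statement5 {k G W : Type u} [Field k] [Group G] [AddCommGroup W] [Module k W]
    (H : Subgroup G) [H.Normal] (hH : H.index = 2)
    (σ : Representation k H W)
    (hσ : Nontrivial W ∧
      ∀ U : Submodule k W, (∀ h : H, ∀ w ∈ U, σ h w ∈ U) → U = ⊥ ∨ U = ⊤) :
    ∃ (V : ModuleCat.{u} k) (ρ : Representation k G ↥V)
      (Wsub Csub : Submodule k ↥V),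
      -- `ρ` is an irreducible representation of `G`
      (Nontrivial ↥V ∧
        ∀ U : Submodule k ↥V, (∀ g : G, ∀ v ∈ U, ρ g v ∈ U) → U = ⊥ ∨ U = ⊤) ∧
      -- `Wsub` is an `H`-subrepresentation of `ρ|_H`
      (∀ h ∈ H, ∀ v ∈ Wsub, ρ h v ∈ Wsub) ∧
      -- with an `H`-stable complement `Csub`
      (∀ h ∈ H, ∀ v ∈ Csub, ρ h v ∈ Csub) ∧
      IsCompl Wsub Csub ∧
      -- `Wsub`, with its `H`-action, is isomorphic to `σ`
      (∃ ι : W →ₗ[k] ↥V, Function.Injective ι ∧ LinearMap.range ι = Wsub ∧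
        ∀ (h : H) (w : W), ι (σ h w) = ρ (h : G) (ι w)) := by
  obtain ⟨hW, hirrσ⟩ := hσ
  have hg₀ex : ∃ g₀, g₀ ∉ H := by
    by_contra h
    push_neg at h
    have : H = ⊤ := (Subgroup.eq_top_iff' H).mpr h
    rw [this, Subgroup.index_top] at hH
    norm_num at hH
  obtain ⟨g₀, hg₀⟩ := hg₀ex
  set ρ := ρprod H σ g₀ hH hg₀ with hρ
  haveI ntWW : Nontrivial (W × W) := by
    obtain ⟨a, b, hab⟩ := hW.exists_pair_ne
    exact ⟨(a, 0), (b, 0), fun h => hab (congrArg Prod.fst h)⟩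
  by_cases hirr : ∀ U : Submodule k (W × W), (∀ g : G, ∀ v ∈ U, ρ g v ∈ U) → U = ⊥ ∨ U = ⊤
  · -- ρprod is irreducible: use it directly
    refine ⟨ModuleCat.of k (W × W), ρ, LinearMap.range (LinearMap.inl k W W),
      LinearMap.range (LinearMap.inr k W W), ⟨ntWW, hirr⟩, ?_, ?_,
      LinearMap.isCompl_range_inl_inr, LinearMap.inl k W W, LinearMap.inl_injective, rfl, ?_⟩
    · rintro h hh v ⟨w, rfl⟩
      refine ⟨σ ⟨h, hh⟩ w, ?_⟩
      show ((σ ⟨h, hh⟩ w, 0) : W × W) = ρ h ((w, 0) : W × W)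
      rw [hρ, ρprod_mem H σ g₀ hH hg₀ h hh w 0, map_zero]
    · rintro h hh v ⟨w, rfl⟩
      refine ⟨σ ⟨g₀ * h * g₀⁻¹, memA H g₀ h hh⟩ w, ?_⟩
      show ((0, σ ⟨g₀ * h * g₀⁻¹, memA H g₀ h hh⟩ w) : W × W) = ρ h ((0, w) : W × W)
      rw [hρ, ρprod_mem H σ g₀ hH hg₀ h hh 0 w, map_zero]
    · intro h w
      show ((σ h w, 0) : W × W) = ρ (h : G) ((w, 0) : W × W)
      rw [hρ, ρprod_mem H σ g₀ hH hg₀ (h : G) h.2 w 0, map_zero, Subtype.coe_eta]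
  · push_neg at hirr
    obtain ⟨U, hUstab, hUbot, hUtop⟩ := hirr
    have hg₀inv : g₀⁻¹ ∉ H := fun hh => hg₀ (by simpa using hh)
    have hmemS₂ : ∀ w : W, ((0, w) : W × W) ∈ U ↔ w ∈ U.comap (LinearMap.inr k W W) :=
      fun w => Iff.rfl
    -- the second axis meets U trivially
    have hS₂stab : ∀ h' : H, ∀ w ∈ U.comap (LinearMap.inr k W W),
        σ h' w ∈ U.comap (LinearMap.inr k W W) := by
      intro h' w hw
      rw [← hmemS₂] at hw ⊢
      have hmem : g₀⁻¹ * (h' : G) * g₀⁻¹⁻¹ ∈ H :=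
        Subgroup.Normal.conj_mem ‹H.Normal› _ h'.2 g₀⁻¹
      have hmem' : g₀⁻¹ * (h' : G) * g₀ ∈ H := by simpa using hmem
      have hst := hUstab (g₀⁻¹ * (h' : G) * g₀) _ hw
      rw [hρ, ρprod_mem H σ g₀ hH hg₀ _ hmem' 0 w, map_zero] at hst
      rwa [σcast H σ _ h' (by group)] at hst
    have hall21 : ∀ w : W, (∀ v : W, ((0, v) : W × W) ∈ U) →
        ((w, 0) : W × W) ∈ U := by
      intro w hall2
      have hy : g₀⁻¹ * g₀⁻¹ ∈ H := Subgroup.mul_self_mem_of_index_two hH g₀⁻¹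
      set y : H := ⟨g₀⁻¹ * g₀⁻¹, hy⟩ with hydef
      have hst := hUstab g₀⁻¹ _ (hall2 (σ y⁻¹ w))
      rw [hρ, ρprod_notmem H σ g₀ hH hg₀ g₀⁻¹ hg₀inv 0 (σ y⁻¹ w), map_zero] at hst
      rw [σcast H σ _ y rfl] at hst
      have hyy : σ y (σ y⁻¹ w) = w := by
        rw [← Module.End.mul_apply, ← map_mul, mul_inv_cancel, map_one, Module.End.one_apply]
      rwa [hyy] at hst
    have hall12 : ∀ w : W, (∀ v : W, ((v, 0) : W × W) ∈ U) →
        ((0, w) : W × W) ∈ U := by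
      intro w hall1
      have hx : g₀ * g₀ ∈ H := Subgroup.mul_self_mem_of_index_two hH g₀
      set x : H := ⟨g₀ * g₀, hx⟩ with hxdef
      have hst := hUstab g₀ _ (hall1 (σ x⁻¹ w))
      rw [hρ, ρprod_notmem H σ g₀ hH hg₀ g₀ hg₀ (σ x⁻¹ w) 0, map_zero] at hst
      rw [σcast H σ _ x rfl] at hst
      have hxx : σ x (σ x⁻¹ w) = w := by
        rw [← Module.End.mul_apply, ← map_mul, mul_inv_cancel, map_one, Module.End.one_apply]
      rwa [hxx] at hst
    have hS₂bot : U.comap (LinearMap.inr k W W) = ⊥ := by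
      rcases hirrσ _ hS₂stab with h | h
      · exact h
      · exfalso; apply hUtop
        have hall2 : ∀ w : W, ((0, w) : W × W) ∈ U := by
          intro w
          rw [hmemS₂, h]; trivial
        have hall1 : ∀ w : W, ((w, 0) : W × W) ∈ U := fun w => hall21 w hall2
        rw [Submodule.eq_top_iff']
        rintro ⟨v₁, v₂⟩
        have hsum : ((v₁, v₂) : W × W) = (v₁, 0) + (0, v₂) := by simp
        rw [hsum]; exact U.add_mem (hall1 v₁) (hall2 v₂)
    -- the first-coordinate projection restricted to U
    set f : U →ₗ[k] W := (LinearMap.fst k W W).comp U.subtype with hfdef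
    have hfap : ∀ u : U, f u = (u : W × W).1 := fun u => rfl
    have hmem2bot : ∀ x : W × W, x ∈ U → x.1 = 0 → x = 0 := by
      intro x hx h1
      have h2 : x.2 ∈ U.comap (LinearMap.inr k W W) := by
        rw [← hmemS₂]
        have : ((0 : W), x.2) = x := by rw [← h1]
        rwa [this]
      rw [hS₂bot, Submodule.mem_bot] at h2
      calc x = (x.1, x.2) := rfl
        _ = 0 := by rw [h1, h2]; rfl
    have hfinj : Function.Injective f := by
      rw [← LinearMap.ker_eq_bot]
      apply (Submodule.eq_bot_iff _).mpr
      intro u hu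
      rw [LinearMap.mem_ker, hfap] at hu
      exact Subtype.ext (hmem2bot _ u.2 hu)
    have hrangestab : ∀ h : H, ∀ w ∈ LinearMap.range f, σ h w ∈ LinearMap.range f := by
      rintro h w ⟨u, rfl⟩
      refine ⟨⟨ρ (h : G) u, hUstab _ _ u.2⟩, ?_⟩
      rw [hfap, hfap]
      have hmm := ρprod_mem H σ g₀ hH hg₀ (h : G) h.2 (u : W × W).1 (u : W × W).2
      calc (ρ (h : G) (u : W × W)).1 = (ρ (h : G) ((u : W × W).1, (u : W × W).2)).1 := rfl
        _ = σ ⟨(h : G), h.2⟩ (u : W × W).1 := by rw [hρ, hmm]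
        _ = σ h (u : W × W).1 := by rw [Subtype.coe_eta]
    have hfsur : Function.Surjective f := by
      rcases hirrσ _ hrangestab with hb | ht
      · exfalso; apply hUbot
        apply (Submodule.eq_bot_iff _).mpr
        intro x hx
        have h1 : x.1 = 0 := by
          have : x.1 ∈ LinearMap.range f := ⟨⟨x, hx⟩, rfl⟩
          rw [hb, Submodule.mem_bot] at this; exact this
        exact hmem2bot x hx h1
      · rw [← LinearMap.range_eq_top]; exact ht
    set e : U ≃ₗ[k] W := LinearEquiv.ofBijective f ⟨hfinj, hfsur⟩ with hedef
    -- the G-representation on U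
    set ρU : Representation k G U :=
      { toFun := fun g => (ρ g).restrict (q := U) (fun z hz => hUstab g z hz)
        map_one' := by
          apply LinearMap.ext; intro u
          apply Subtype.ext
          simp [LinearMap.restrict_apply]
        map_mul' := fun g g' => by
          apply LinearMap.ext; intro u
          apply Subtype.ext
          simp [LinearMap.restrict_apply, map_mul] } with hρUdef
    have hρUap : ∀ (g : G) (u : U), ((ρU g u : U) : W × W) = ρ g (u : W × W) :=
      fun g u => rfl
    have hequiv : ∀ (h : H) (u : U), e (ρU (h : G) u) = σ h (e u) := by
      intro h u
      have h1 : e (ρU (h : G) u) = (ρ (h : G) (u : W × W)).1 := rfl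
      have h2 : (e u : W) = (u : W × W).1 := rfl
      rw [h1, h2]
      have hmm := ρprod_mem H σ g₀ hH hg₀ (h : G) h.2 (u : W × W).1 (u : W × W).2
      calc (ρ (h : G) (u : W × W)).1 = (ρ (h : G) ((u : W × W).1, (u : W × W).2)).1 := rfl
        _ = σ ⟨(h : G), h.2⟩ (u : W × W).1 := by rw [hρ, hmm]
        _ = σ h (u : W × W).1 := by rw [Subtype.coe_eta]
    haveI hntU : Nontrivial U := Submodule.nontrivial_iff_ne_bot.mpr hUbot
    refine ⟨ModuleCat.of k U, ρU, ⊤, ⊥, ⟨hntU, ?_⟩, fun _ _ _ _ => Submodule.mem_top,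
      ?_, isCompl_top_bot, e.symm.toLinearMap, e.symm.injective, ?_, ?_⟩
    · -- irreducibility of ρU
      intro U' hU'
      have hstabS : ∀ h : H, ∀ w ∈ U'.map e.toLinearMap, σ h w ∈ U'.map e.toLinearMap := by
        rintro h w ⟨u', hu', rfl⟩
        refine ⟨ρU (h : G) u', hU' (h : G) u' hu', ?_⟩
        exact hequiv h u'
      rcases hirrσ _ hstabS with hb | ht
      · left
        apply Submodule.map_injective_of_injective e.injective (f := e.toLinearMap)
        rw [hb, Submodule.map_bot]
      · right
        apply Submodule.map_injective_of_injective e.injective (f := e.toLinearMap)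
        rw [ht, Submodule.map_top]
        exact (LinearMap.range_eq_top.mpr e.surjective).symm
    · intro h _ v hv
      rw [Submodule.mem_bot] at hv ⊢
      rw [hv, map_zero]
    · rw [LinearMap.range_eq_top]
      exact e.symm.surjective
    · intro h w
      apply e.injective
      show e (e.symm (σ h w)) = e (ρU (h : G) (e.symm w))
      rw [LinearEquiv.apply_symm_apply, hequiv, LinearEquiv.apply_symm_apply]
end

section
/- Let P ∈ k[X,Y] be a homogeneous polynomial of degree d. Then P(a,b) = 0 for every pair (a,b) ∈ 𝔽_q × 𝔽_q with (a,b) ≠ (0,0) if and only if the polynomial X^q·Y − X·Y^q divides P in k[X,Y]. -/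
open MvPolynomial

lemma aux_fsE_X1 {k : Type*} [CommSemiring k] :
    (finSuccEquiv k 1) (X (1 : Fin 2)) = Polynomial.C (X 0) :=
  finSuccEquiv_X_succ (j := 0)

lemma aux_scale {k S : Type*} [CommSemiring k] [CommSemiring S] {σ : Type*} {d : ℕ}
    {P : MvPolynomial σ k} (hP : P.IsHomogeneous d) (f : k →+* S) (r : S) (x : σ → S) :
    eval₂ f (fun i => r * x i) P = r ^ d * eval₂ f x P := by
  rw [eval₂_eq, eval₂_eq, Finset.mul_sum]
  apply Finset.sum_congr rfl
  intro m hm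
  have hdeg : ∑ i ∈ m.support, m i = d := by
    simpa [Finsupp.weight_apply, Finsupp.sum] using hP (mem_support_iff.mp hm)
  rw [← hdeg]
  simp_rw [mul_pow]
  rw [Finset.prod_mul_distrib, Finset.prod_pow_eq_pow_sum]
  ring

lemma aux_eval_finSuccEquiv {k : Type*} [CommSemiring k] (g : MvPolynomial (Fin 1) k)
    (Q : MvPolynomial (Fin 2) k) :
    Polynomial.eval g (finSuccEquiv k 1 Q) = eval₂ (C : k →+* _) ![g, X 0] Q := by
  have h : (Polynomial.evalRingHom g).comp ((finSuccEquiv k 1) : MvPolynomial (Fin 2) k →+* Polynomial (MvPolynomial (Fin 1) k)) =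
      eval₂Hom (C : k →+* _) ![g, X 0] := by
    apply MvPolynomial.ringHom_ext
    · intro r
      simp [finSuccEquiv_apply]
    · intro i
      fin_cases i
      · simp [finSuccEquiv_X_zero]
      · simp [aux_fsE_X1]
  exact DFunLike.congr_fun h Q

lemma aux_linear_dvd {k : Type*} [Field k] {d : ℕ} {P : MvPolynomial (Fin 2) k}
    (hP : P.IsHomogeneous d) (c : k) :
    (X 0 - C c * X 1 : MvPolynomial (Fin 2) k) ∣ P ↔ eval ![c, 1] P = 0 := by
  set e := finSuccEquiv k 1 with he
  have hdvd : ∀ u v : MvPolynomial (Fin 2) k, u ∣ v ↔ e u ∣ e v :=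
    fun u v => (map_dvd_iff e).symm
  have hL : e (X 0 - C c * X 1) = Polynomial.X - Polynomial.C (C c * X 0) := by
    rw [map_sub, map_mul, finSuccEquiv_X_zero, aux_fsE_X1]
    have hC : e (C c) = Polynomial.C (C c) := by
      rw [show (C c : MvPolynomial (Fin 2) k) = algebraMap k _ c from rfl, AlgEquiv.commutes,
        Polynomial.algebraMap_apply, algebraMap_eq]
    rw [hC, ← Polynomial.C_mul]
  rw [hdvd, hL, Polynomial.dvd_iff_isRoot, Polynomial.IsRoot, aux_eval_finSuccEquiv]
  have hvec : ![C c * X 0, (X 0 : MvPolynomial (Fin 1) k)] =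
      fun i => (X 0 : MvPolynomial (Fin 1) k) * ![C c, 1] i := by
    funext i; fin_cases i <;> simp [mul_comm]
  rw [hvec, aux_scale hP]
  have hfun : (⇑(C : k →+* MvPolynomial (Fin 1) k) ∘ ![c, 1]) = ![C c, 1] := by
    funext i; fin_cases i <;> simp
  have hcl : eval₂ (C : k →+* MvPolynomial (Fin 1) k) ![C c, 1] P = C (eval ![c, 1] P) := by
    have h0 := eval₂_comp_left (C : k →+* MvPolynomial (Fin 1) k) (RingHom.id k) ![c, 1] P
    rw [hfun, RingHom.comp_id] at h0
    rw [← h0]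
    rfl
  rw [hcl]
  constructor
  · intro h
    rcases mul_eq_zero.mp h with h | h
    · exact absurd h (pow_ne_zero _ (X_ne_zero 0))
    · exact C_eq_zero.mp h
  · intro h
    rw [h, C_0, mul_zero]

lemma aux_X1_dvd {k : Type*} [Field k] {d : ℕ} {P : MvPolynomial (Fin 2) k}
    (hP : P.IsHomogeneous d) :
    (X 1 : MvPolynomial (Fin 2) k) ∣ P ↔ eval ![1, 0] P = 0 := by
  have hren : ∀ u v : MvPolynomial (Fin 2) k, u ∣ v ↔
      rename (Equiv.swap (0 : Fin 2) 1) u ∣ rename (Equiv.swap (0 : Fin 2) 1) v :=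
    fun u v => (map_dvd_iff (renameEquiv k (Equiv.swap (0 : Fin 2) 1))).symm
  rw [hren, rename_X, Equiv.swap_apply_right]
  have h0 : (X 0 : MvPolynomial (Fin 2) k) = X 0 - C (0 : k) * X 1 := by simp
  rw [h0, aux_linear_dvd (hP.rename_isHomogeneous) 0, eval_rename]
  have : (![(0 : k), 1] ∘ (Equiv.swap (0 : Fin 2) 1)) = ![1, 0] := by
    funext i; fin_cases i <;> simp
  rw [this]

lemma aux_fsE_L {k : Type*} [CommRing k] (c : k) :
    (finSuccEquiv k 1) (X 0 - C c * X 1) = Polynomial.X - Polynomial.C (C c * X 0) := by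
  rw [map_sub, map_mul, finSuccEquiv_X_zero, aux_fsE_X1]
  have hC : (finSuccEquiv k 1) (C c) = Polynomial.C (C c) := by
    rw [show (C c : MvPolynomial (Fin 2) k) = algebraMap k _ c from rfl, AlgEquiv.commutes,
      Polynomial.algebraMap_apply, algebraMap_eq]
  rw [hC, ← Polynomial.C_mul]

lemma aux_prime_linear {k : Type*} [Field k] (c : k) :
    Prime (X 0 - C c * X 1 : MvPolynomial (Fin 2) k) := by
  have h : Prime ((finSuccEquiv k 1) (X 0 - C c * X 1)) := by
    rw [aux_fsE_L]
    exact Polynomial.prime_X_sub_C _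
  exact (MulEquiv.prime_iff (finSuccEquiv k 1)).mp h

lemma aux_prime_X1 {k : Type*} [Field k] :
    Prime (X 1 : MvPolynomial (Fin 2) k) := by
  have hX0 : Prime (X 0 : MvPolynomial (Fin 1) k) := by
    have h : Prime ((finSuccEquiv k 0) (X 0)) := by
      rw [finSuccEquiv_X_zero]
      exact Polynomial.prime_X
    exact (MulEquiv.prime_iff (finSuccEquiv k 0)).mp h
  have h : Prime ((finSuccEquiv k 1) (X 1)) := by
    rw [aux_fsE_X1]
    exact Polynomial.prime_C_iff.mpr hX0
  exact (MulEquiv.prime_iff (finSuccEquiv k 1)).mp h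

lemma aux_prod_primes_dvd {α ι : Type*} [CommMonoidWithZero α] (s : Finset ι) (f : ι → α) (n : α)
    (hp : ∀ i ∈ s, Prime (f i)) (hd : ∀ i ∈ s, f i ∣ n)
    (hns : ∀ i ∈ s, ∀ j ∈ s, i ≠ j → ¬ (f i ∣ f j)) : (∏ i ∈ s, f i) ∣ n := by
  classical
  induction s using Finset.cons_induction with
  | empty => simp
  | cons a s ha ih =>
    rw [Finset.prod_cons]
    obtain ⟨m, hm⟩ := ih (fun i hi => hp i (Finset.mem_cons_of_mem hi))
      (fun i hi => hd i (Finset.mem_cons_of_mem hi))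
      (fun i hi j hj hij => hns i (Finset.mem_cons_of_mem hi) j (Finset.mem_cons_of_mem hj) hij)
    have hpa : Prime (f a) := hp a (Finset.mem_cons_self a s)
    have hdvd : f a ∣ (∏ i ∈ s, f i) * m := hm ▸ hd a (Finset.mem_cons_self a s)
    rcases hpa.dvd_mul.mp hdvd with h | h
    · obtain ⟨i, hi, hfi⟩ := hpa.exists_mem_finset_dvd h
      exact absurd hfi (hns a (Finset.mem_cons_self a s) i (Finset.mem_cons_of_mem hi)
        (fun hai => ha (hai ▸ hi)))
    · obtain ⟨m', rfl⟩ := h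
      exact ⟨m', by rw [hm, mul_comm (f a) m', ← mul_assoc, mul_right_comm, mul_comm (∏ i ∈ s, f i) (f a)]⟩

open Polynomial in
lemma aux_F_prod {F : Type*} [Field F] [Fintype F] :
    ∏ c : F, (Polynomial.X - Polynomial.C c) =
      Polynomial.X ^ (Fintype.card F) - Polynomial.X := by
  have h1 : 1 < Fintype.card F := Fintype.one_lt_card
  have hmonic : (Polynomial.X ^ Fintype.card F - Polynomial.X : F[X]).Monic :=
    monic_X_pow_sub (by rw [degree_X]; exact_mod_cast h1)
  have hroots := FiniteField.roots_X_pow_card_sub_X F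
  have hdeg := FiniteField.X_pow_card_sub_X_natDegree_eq F h1
  have h := prod_multiset_X_sub_C_of_monic_of_roots_card_eq hmonic
    (by rw [hroots, hdeg]; simp)
  rw [← h, hroots]
  rfl

lemma aux_factor {F k : Type*} [Field F] [Fintype F] [Field k] [Algebra F k] {q : ℕ}
    (hq : Fintype.card F = q) :
    (X 0 ^ q * X 1 - X 0 * X 1 ^ q : MvPolynomial (Fin 2) k) =
      X 1 * ∏ c : F, (X 0 - C (algebraMap F k c) * X 1) := by
  subst hq
  set A := MvPolynomial (Fin 2) k with hA
  have hinj : Function.Injective (algebraMap A (FractionRing A)) :=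
    IsFractionRing.injective A (FractionRing A)
  apply hinj
  set φ := algebraMap A (FractionRing A) with hφ
  set g : F →+* FractionRing A := (φ.comp (C : k →+* A)).comp (algebraMap F k) with hg
  set x := φ (X 0) with hx
  set y := φ (X 1) with hy
  have hy0 : y ≠ 0 := by
    intro h
    exact X_ne_zero (1 : Fin 2) (hinj (by rw [map_zero]; exact h))
  have hLHS : φ (X 0 ^ Fintype.card F * X 1 - X 0 * X 1 ^ Fintype.card F : A) =
      x ^ Fintype.card F * y - x * y ^ Fintype.card F := by
    simp [map_sub, map_mul, map_pow, hx, hy]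
  have hRHS : φ (X 1 * ∏ c : F, (X 0 - C (algebraMap F k c) * X 1) : A) =
      y * ∏ c : F, (x - g c * y) := by
    rw [map_mul, map_prod]
    congr 1
    apply Finset.prod_congr rfl
    intro c _
    rw [map_sub, map_mul]
    rfl
  rw [hLHS, hRHS]
  set t := x * y⁻¹ with ht
  have hT : ∏ c : F, (t - g c) = t ^ Fintype.card F - t := by
    have h0 := congrArg ((Polynomial.evalRingHom t).comp (Polynomial.mapRingHom g))
      (aux_F_prod (F := F))
    simpa [map_prod, Polynomial.coe_mapRingHom] using h0
  have hfac : ∀ c : F, x - g c * y = (t - g c) * y := by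
    intro c
    rw [ht, sub_mul, mul_assoc, inv_mul_cancel₀ hy0, mul_one]
  calc x ^ Fintype.card F * y - x * y ^ Fintype.card F
      = y * (((x * y⁻¹) ^ Fintype.card F - x * y⁻¹) * y ^ Fintype.card F) := by
        rw [mul_pow, inv_pow]
        have hn : (y ^ Fintype.card F)⁻¹ * y ^ Fintype.card F = 1 :=
          inv_mul_cancel₀ (pow_ne_zero _ hy0)
        have h1 : y⁻¹ * y = 1 := inv_mul_cancel₀ hy0
        linear_combination (-(x ^ Fintype.card F * y)) * hn + (x * y ^ Fintype.card F) * h1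
    _ = y * ∏ c : F, (x - g c * y) := by
        rw [Finset.prod_congr rfl (fun c _ => hfac c), Finset.prod_mul_distrib,
          Finset.prod_const, Finset.card_univ, hT, ht]

lemma aux_hom_linear {k : Type*} [CommRing k] (c' : k) :
    (X 0 - C c' * X 1 : MvPolynomial (Fin 2) k).IsHomogeneous 1 := by
  apply IsHomogeneous.sub (isHomogeneous_X _ _)
  simpa using (isHomogeneous_C _ c').mul (isHomogeneous_X k (1 : Fin 2))

/-- Let `F` be the field with `q` elements, `k` a field which is an
`F`-algebra, and `P ∈ k[X,Y]` a homogeneous polynomial of degree `d`. Then `P` vanishes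
at every point `(a, b) ∈ F × F` with `(a, b) ≠ (0, 0)` if and only if
`X^q·Y − X·Y^q` divides `P` in `k[X,Y]`. -/
theorem statement8 {F k : Type*} [Field F] [Fintype F] [Field k] [Algebra F k]
    {q : ℕ} (hq : Fintype.card F = q) {d : ℕ}
    (P : MvPolynomial (Fin 2) k) (hP : P.IsHomogeneous d) :
    (∀ a b : F, (a, b) ≠ (0, 0) →
        eval ![algebraMap F k a, algebraMap F k b] P = 0) ↔
      (X 0 ^ q * X 1 - X 0 * X 1 ^ q : MvPolynomial (Fin 2) k) ∣ P := by
  constructor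
  · intro h
    have key : (∏ i : Option F,
        (Option.elim i (X 1) (fun c => X 0 - C (algebraMap F k c) * X 1) :
          MvPolynomial (Fin 2) k)) ∣ P := by
      apply aux_prod_primes_dvd
      · rintro (_ | c) _
        · exact aux_prime_X1
        · exact aux_prime_linear _
      · rintro (_ | c) _
        · have h10 := h 1 0 (by simp)
          rw [map_one, map_zero] at h10
          exact (aux_X1_dvd hP).mpr h10
        · have hc1 := h c 1 (by simp [Prod.ext_iff])
          rw [map_one] at hc1
          exact (aux_linear_dvd hP _).mpr hc1
      · rintro (_ | c) _ (_ | c') _ hij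
        · exact absurd rfl hij
        · intro hdvd
          have := (aux_X1_dvd (aux_hom_linear (algebraMap F k c'))).mp hdvd
          simp at this
        · intro hdvd
          have := (aux_linear_dvd (isHomogeneous_X k (1 : Fin 2)) _).mp hdvd
          simp at this
        · intro hdvd
          have heval := (aux_linear_dvd (aux_hom_linear (algebraMap F k c')) _).mp hdvd
          simp only [eval_sub, eval_mul, eval_X, eval_C, Matrix.cons_val_zero,
            Matrix.cons_val_one, Matrix.head_cons, mul_one] at heval
          have : algebraMap F k c = algebraMap F k c' := by linear_combination heval
          exact hij (by rw [(algebraMap F k).injective this])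
    rw [aux_factor hq]
    rwa [Fintype.prod_option] at key
  · rintro ⟨Q, rfl⟩ a b _
    simp only [eval_mul, eval_sub, eval_pow, eval_X, Matrix.cons_val_zero, Matrix.cons_val_one,
      Matrix.head_cons]
    have ha : (algebraMap F k a) ^ q = algebraMap F k a := by
      rw [← map_pow, ← hq, FiniteField.pow_card]
    have hb : (algebraMap F k b) ^ q = algebraMap F k b := by
      rw [← map_pow, ← hq, FiniteField.pow_card]
    rw [ha, hb, sub_self, zero_mul]
end

section
/- Let d ≥ q+1. The set of homogeneous polynomials P ∈ k[X,Y] of degree d satisfying P(a,b) = 0 for every pair (a,b) ∈ 𝔽_q × 𝔽_q with (a,b) ≠ (0,0) is exactly the set of products (X^q·Y − X·Y^q)·Q where Q ranges over the homogeneous polynomials of degree d − q − 1; as a k-vector space it has dimension d − q. -/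
open MvPolynomial

/-- The `k`-subspace of `k[X,Y]` consisting of homogeneous polynomials of degree `d`
vanishing at every point `(a, b) ∈ F × F` with `(a, b) ≠ (0, 0)`. -/
noncomputable def vanishingSubmodule (F k : Type*) [Field F] [Fintype F] [Field k]
    [Algebra F k] (d : ℕ) : Submodule k (MvPolynomial (Fin 2) k) where
  carrier := {P | P.IsHomogeneous d ∧ ∀ a b : F, (a, b) ≠ (0, 0) →
      eval ![algebraMap F k a, algebraMap F k b] P = 0}
  add_mem' := by
    rintro P Q ⟨hP, hPv⟩ ⟨hQ, hQv⟩
    exact ⟨hP.add hQ, fun a b hab => by simp [hPv a b hab, hQv a b hab]⟩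
  zero_mem' := ⟨isHomogeneous_zero _ _ _, fun a b hab => by simp⟩
  smul_mem' := by
    rintro c P ⟨hP, hPv⟩
    refine ⟨?_, fun a b hab => by simp [hPv a b hab]⟩
    rw [smul_eq_C_mul]
    simpa using (isHomogeneous_C (Fin 2) c).mul hP

namespace Statement10Aux

open Polynomial Finsupp

variable {k : Type*} [Field k]

noncomputable abbrev deh : MvPolynomial (Fin 2) k →ₐ[k] k[X] :=
  MvPolynomial.aeval ![Polynomial.X, 1]

lemma fin2_eq (m : Fin 2 →₀ ℕ) : m = single 0 (m 0) + single 1 (m 1) := by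
  ext i
  fin_cases i <;> simp [Finsupp.single_apply]

lemma degree_fin2 (m : Fin 2 →₀ ℕ) : m.degree = m 0 + m 1 := by
  rw [Finsupp.degree, ← Fin.sum_univ_two (fun i => m i)]
  exact Finset.sum_subset (Finset.subset_univ _)
    (fun i _ hi => Finsupp.notMem_support_iff.mp hi)

lemma pair_apply0 (i j : ℕ) : (single 0 i + single 1 j : Fin 2 →₀ ℕ) 0 = i := by
  simp [Finsupp.single_apply]

lemma pair_apply1 (i j : ℕ) : (single 0 i + single 1 j : Fin 2 →₀ ℕ) 1 = j := by
  simp [Finsupp.single_apply]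

lemma degree_pair (i j : ℕ) : (single 0 i + single 1 j : Fin 2 →₀ ℕ).degree = i + j := by
  rw [degree_fin2, pair_apply0, pair_apply1]

lemma mem_supp_degree {P : MvPolynomial (Fin 2) k} {n : ℕ} (hP : P.IsHomogeneous n)
    {m : Fin 2 →₀ ℕ} (hm : m ∈ P.support) : m.degree = n := by
  by_contra h
  exact (MvPolynomial.mem_support_iff.mp hm) (hP.coeff_eq_zero h)

lemma deh_monomial (m : Fin 2 →₀ ℕ) (c : k) :
    deh (monomial m c) = Polynomial.C c * Polynomial.X ^ (m 0) := by
  rw [MvPolynomial.aeval_monomial, Finsupp.prod_fintype _ _ (fun i => pow_zero _)]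
  simp [Fin.prod_univ_two, Polynomial.algebraMap_eq]

lemma coeff_deh {P : MvPolynomial (Fin 2) k} {n : ℕ} (hP : P.IsHomogeneous n) (j : ℕ) :
    (deh P).coeff j = MvPolynomial.coeff (single 0 j + single 1 (n - j)) P := by
  conv_lhs => rw [← support_sum_monomial_coeff P]
  rw [map_sum, Polynomial.finset_sum_coeff]
  simp only [deh_monomial, Polynomial.coeff_C_mul, Polynomial.coeff_X_pow]
  rw [Finset.sum_eq_single (single 0 j + single 1 (n - j) : Fin 2 →₀ ℕ)]
  · rw [pair_apply0]
    simp
  · intro m hm hne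
    have hd : m.degree = n := mem_supp_degree hP hm
    by_cases h0 : j = m 0
    · exfalso
      apply hne
      have hd2 := degree_fin2 m
      have h1 : m 1 = n - j := by omega
      conv_lhs => rw [fin2_eq m, ← h0, h1]
    · simp [h0]
  · intro h
    rw [MvPolynomial.notMem_support_iff.mp h]
    simp

lemma deh_inj {P Q : MvPolynomial (Fin 2) k} {n : ℕ} (hP : P.IsHomogeneous n)
    (hQ : Q.IsHomogeneous n) (h : deh P = deh Q) : P = Q := by
  ext m
  by_cases hd : m.degree = n
  · have hd2 := degree_fin2 m
    have h1 : m 1 = n - m 0 := by omega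
    calc MvPolynomial.coeff m P = (deh P).coeff (m 0) := by
          rw [coeff_deh hP]; congr 1; conv_lhs => rw [fin2_eq m, h1]
    _ = (deh Q).coeff (m 0) := by rw [h]
    _ = MvPolynomial.coeff m Q := by
          rw [coeff_deh hQ]; congr 1; conv_rhs => rw [fin2_eq m, h1]
  · rw [hP.coeff_eq_zero hd, hQ.coeff_eq_zero hd]

noncomputable def hom (n : ℕ) (p : k[X]) : MvPolynomial (Fin 2) k :=
  ∑ i ∈ Finset.range (n + 1),
    MvPolynomial.monomial (single 0 i + single 1 (n - i)) (p.coeff i)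

lemma hom_isHomogeneous (n : ℕ) (p : k[X]) : (hom n p).IsHomogeneous n := by
  apply MvPolynomial.IsHomogeneous.sum
  intro i hi
  apply isHomogeneous_monomial
  rw [degree_pair]
  have := Finset.mem_range.mp hi
  omega

lemma deh_hom (n : ℕ) (p : k[X]) (hp : p.natDegree < n + 1) : deh (hom n p) = p := by
  rw [hom, map_sum]
  conv_rhs => rw [p.as_sum_range' (n + 1) hp]
  refine Finset.sum_congr rfl fun i hi => ?_
  rw [deh_monomial, pair_apply0, Polynomial.C_mul_X_pow_eq_monomial]

lemma eval_deh (P : MvPolynomial (Fin 2) k) (x : k) :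
    (deh P).eval x = MvPolynomial.eval ![x, 1] P := by
  induction P using MvPolynomial.induction_on with
  | C a => simp
  | add p q hp hq => simp [hp, hq]
  | mul_X p i hp =>
    rw [map_mul, Polynomial.eval_mul, hp, map_mul]
    congr 1
    fin_cases i <;> simp

lemma eval_one_zero {P : MvPolynomial (Fin 2) k} {n : ℕ} (hP : P.IsHomogeneous n) :
    MvPolynomial.eval ![(1 : k), 0] P = MvPolynomial.coeff (single 0 n) P := by
  rw [eval_eq']
  rw [Finset.sum_eq_single (single 0 n : Fin 2 →₀ ℕ)]
  · simp [Fin.prod_univ_two, Finsupp.single_apply]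
  · intro m hm hne
    have hd : m.degree = n := mem_supp_degree hP hm
    have hd2 := degree_fin2 m
    have h1 : m 1 ≠ 0 := by
      intro h1
      apply hne
      have h0 : m 0 = n := by omega
      conv_lhs => rw [fin2_eq m, h0, h1]
      simp
    rw [Fin.prod_univ_two]
    simp [zero_pow h1]
  · intro h
    rw [MvPolynomial.notMem_support_iff.mp h]
    simp

lemma deh_D (q : ℕ) :
    deh (X 0 ^ q * X 1 - X 0 * X 1 ^ q : MvPolynomial (Fin 2) k)
      = Polynomial.X ^ q - Polynomial.X := by
  simp

lemma D_hom (q : ℕ) :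
    (X 0 ^ q * X 1 - X 0 * X 1 ^ q : MvPolynomial (Fin 2) k).IsHomogeneous (q + 1) := by
  apply MvPolynomial.IsHomogeneous.sub
  · exact (isHomogeneous_X_pow (0 : Fin 2) q).mul (isHomogeneous_X k (1 : Fin 2))
  · have h2 := (isHomogeneous_X k (0 : Fin 2)).mul (isHomogeneous_X_pow (1 : Fin 2) q)
    have e : 1 + q = q + 1 := Nat.add_comm 1 q
    exact e ▸ h2


lemma forward {F : Type*} [Field F] [Fintype F] [Algebra F k] {q d : ℕ}
    (hq : Fintype.card F = q) (hd : q + 1 ≤ d) {P : MvPolynomial (Fin 2) k}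
    (hP : P.IsHomogeneous d)
    (hv : ∀ a b : F, (a, b) ≠ (0, 0) →
      MvPolynomial.eval ![algebraMap F k a, algebraMap F k b] P = 0) :
    ∃ Q : MvPolynomial (Fin 2) k, Q.IsHomogeneous (d - q - 1) ∧
      P = (X 0 ^ q * X 1 - X 0 * X 1 ^ q) * Q := by
  have hq2 : 1 < q := hq ▸ Fintype.one_lt_card
  set f : k[X] := Polynomial.X ^ q - Polynomial.X with hf
  have hmonic : f.Monic := Polynomial.monic_X_pow_sub
    (by rw [Polynomial.degree_X]; exact_mod_cast hq2)
  have hfdeg : f.natDegree = q := FiniteField.X_pow_card_sub_X_natDegree_eq k hq2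
  set p := deh P with hp
  have hcd : (deh P).coeff d = 0 := by
    rw [coeff_deh hP, Nat.sub_self, Finsupp.single_zero, add_zero, ← eval_one_zero hP]
    have := hv 1 0 (by simp)
    simpa using this
  have hpdeg : p.natDegree ≤ d - 1 := by
    rw [Polynomial.natDegree_le_iff_coeff_eq_zero]
    intro m hm
    rcases eq_or_lt_of_le (show d ≤ m by omega) with h | h
    · rw [← h]; exact hcd
    · rw [hp, coeff_deh hP]
      apply hP.coeff_eq_zero
      rw [degree_pair]
      omega
  have hvan : ∀ a : F, p.eval (algebraMap F k a) = 0 := by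
    intro a
    rw [hp, eval_deh]
    have := hv a 1 (by simp)
    simpa using this
  have hfvan : ∀ a : F, f.eval (algebraMap F k a) = 0 := by
    intro a
    have ha : (algebraMap F k a) ^ q = algebraMap F k a := by
      rw [← map_pow, ← hq, FiniteField.pow_card]
    simp [hf, ha]
  have hmod : p %ₘ f = 0 := by
    by_contra h0
    refine h0 (Polynomial.eq_zero_of_natDegree_lt_card_of_eval_eq_zero (p %ₘ f)
      (algebraMap F k).injective (fun a => ?_) ?_)
    · have h2 := Polynomial.modByMonic_add_div p f
      have h3 : p %ₘ f = p - f * (p /ₘ f) := by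
        rw [eq_sub_iff_add_eq, h2]
      rw [h3]
      simp [hvan a, hfvan a]
    · rw [hq, ← hfdeg]
      exact Polynomial.natDegree_lt_natDegree h0 (Polynomial.degree_modByMonic_lt p hmonic)
  set h := p /ₘ f with hh
  have hph : p = f * h := by
    have h2 := Polynomial.modByMonic_add_div p f
    rw [hmod, zero_add] at h2
    exact h2.symm
  have hhdeg : h.natDegree < d - q - 1 + 1 := by
    rw [hh, Polynomial.natDegree_divByMonic p hmonic, hfdeg]
    omega
  refine ⟨hom (d - q - 1) h, hom_isHomogeneous _ _, ?_⟩
  have hDQ : ((X 0 ^ q * X 1 - X 0 * X 1 ^ q) * hom (d - q - 1) h :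
      MvPolynomial (Fin 2) k).IsHomogeneous d := by
    have := (D_hom (k := k) q).mul (hom_isHomogeneous (d - q - 1) h)
    have e : q + 1 + (d - q - 1) = d := by omega
    rwa [e] at this
  apply deh_inj hP hDQ
  rw [map_mul, deh_hom _ _ hhdeg, deh_D, ← hf, ← hp, hph]


lemma finrank_homog (n : ℕ) :
    Module.finrank k ↥(homogeneousSubmodule (Fin 2) k n) = n + 1 := by
  have e : ↥(homogeneousSubmodule (Fin 2) k n) ≃ₗ[k] ↥(Polynomial.degreeLT k (n + 1)) := by
    refine LinearEquiv.ofBijective (LinearMap.codRestrict (Polynomial.degreeLT k (n + 1))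
      ((deh (k := k)).toLinearMap ∘ₗ (homogeneousSubmodule (Fin 2) k n).subtype) ?_) ⟨?_, ?_⟩
    · rintro ⟨P, hP⟩
      rw [LinearMap.comp_apply]
      rw [Polynomial.mem_degreeLT, Polynomial.degree_lt_iff_coeff_zero]
      intro m hm
      have hm' : n + 1 ≤ m := by exact_mod_cast hm
      have hP' : P.IsHomogeneous n := (mem_homogeneousSubmodule _ _).mp hP
      rw [Submodule.subtype_apply, AlgHom.toLinearMap_apply, coeff_deh hP']
      apply hP'.coeff_eq_zero
      rw [degree_pair]
      omega
    · intro x y hxy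
      have h2 := congrArg Subtype.val hxy
      simp only [LinearMap.codRestrict_apply, LinearMap.comp_apply, Submodule.subtype_apply,
        AlgHom.toLinearMap_apply] at h2
      exact Subtype.ext (deh_inj ((mem_homogeneousSubmodule _ _).mp x.2)
        ((mem_homogeneousSubmodule _ _).mp y.2) h2)
    · rintro ⟨p, hp⟩
      have hdeg : p.natDegree < n + 1 := by
        rcases eq_or_ne p 0 with rfl | h0
        · simp
        · exact (Polynomial.natDegree_lt_iff_degree_lt h0).mpr (Polynomial.mem_degreeLT.mp hp)
      refine ⟨⟨hom n p, hom_isHomogeneous n p⟩, ?_⟩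
      apply Subtype.ext
      simpa using deh_hom n p hdeg
  rw [e.finrank_eq, (Polynomial.degreeLTEquiv k (n + 1)).finrank_eq, Module.finrank_fin_fun]

end Statement10Aux

/-- Let `F` be the field with `q` elements, `k` a field which is an
`F`-algebra, and `d ≥ q + 1`. The set of homogeneous polynomials `P ∈ k[X,Y]` of degree
`d` vanishing at every `(a, b) ∈ F × F` with `(a, b) ≠ (0, 0)` is exactly the set of
products `(X^q·Y − X·Y^q)·Q` with `Q` homogeneous of degree `d − q − 1`; as a
`k`-vector space it has dimension `d − q`. -/
theorem statement10 {F k : Type*} [Field F] [Fintype F] [Field k] [Algebra F k]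
    {q d : ℕ} (hq : Fintype.card F = q) (hd : q + 1 ≤ d) :
    (∀ P : MvPolynomial (Fin 2) k,
        (P.IsHomogeneous d ∧ ∀ a b : F, (a, b) ≠ (0, 0) →
            eval ![algebraMap F k a, algebraMap F k b] P = 0) ↔
          ∃ Q : MvPolynomial (Fin 2) k, Q.IsHomogeneous (d - q - 1) ∧
            P = (X 0 ^ q * X 1 - X 0 * X 1 ^ q) * Q) ∧
    Module.finrank k ↥(vanishingSubmodule F k d) = d - q := by
  have hq2 : 1 < q := hq ▸ Fintype.one_lt_card
  have hiff : ∀ P : MvPolynomial (Fin 2) k,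
      (P.IsHomogeneous d ∧ ∀ a b : F, (a, b) ≠ (0, 0) →
          eval ![algebraMap F k a, algebraMap F k b] P = 0) ↔
        ∃ Q : MvPolynomial (Fin 2) k, Q.IsHomogeneous (d - q - 1) ∧
          P = (X 0 ^ q * X 1 - X 0 * X 1 ^ q) * Q := by
    intro P
    constructor
    · rintro ⟨hP, hv⟩
      exact Statement10Aux.forward hq hd hP hv
    · rintro ⟨Q, hQ, rfl⟩
      constructor
      · have h2 := (Statement10Aux.D_hom (k := k) q).mul hQ
        have e : q + 1 + (d - q - 1) = d := by omega
        rwa [e] at h2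
      · intro a b hab
        have ha : (algebraMap F k a) ^ q = algebraMap F k a := by
          rw [← map_pow, ← hq, FiniteField.pow_card]
        have hb : (algebraMap F k b) ^ q = algebraMap F k b := by
          rw [← map_pow, ← hq, FiniteField.pow_card]
        rw [map_mul]
        simp only [map_sub, map_mul, map_pow, eval_X, Matrix.cons_val_zero, Matrix.cons_val_one,
          Matrix.head_cons]
        rw [ha, hb, sub_self, zero_mul]
  refine ⟨hiff, ?_⟩
  have hmem : ∀ P : MvPolynomial (Fin 2) k, P ∈ vanishingSubmodule F k d ↔
      (P.IsHomogeneous d ∧ ∀ a b : F, (a, b) ≠ (0, 0) →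
        eval ![algebraMap F k a, algebraMap F k b] P = 0) := fun P => Iff.rfl
  have hV : vanishingSubmodule F k d = Submodule.map
      (LinearMap.mulLeft k (X 0 ^ q * X 1 - X 0 * X 1 ^ q : MvPolynomial (Fin 2) k))
      (homogeneousSubmodule (Fin 2) k (d - q - 1)) := by
    ext P
    rw [Submodule.mem_map, hmem P, hiff P]
    constructor
    · rintro ⟨Q, hQ, hPQ⟩
      exact ⟨Q, hQ, by rw [LinearMap.mulLeft_apply, hPQ]⟩
    · rintro ⟨Q, hQ, rfl⟩
      exact ⟨Q, hQ, by rw [LinearMap.mulLeft_apply]⟩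
  have hDne : (X 0 ^ q * X 1 - X 0 * X 1 ^ q : MvPolynomial (Fin 2) k) ≠ 0 := by
    intro h
    apply FiniteField.X_pow_card_sub_X_ne_zero k hq2
    rw [← Statement10Aux.deh_D q, h, map_zero]
  have hinj : Function.Injective
      (LinearMap.mulLeft k (X 0 ^ q * X 1 - X 0 * X 1 ^ q : MvPolynomial (Fin 2) k)) := by
    intro x y hxy
    simp only [LinearMap.mulLeft_apply] at hxy
    exact mul_left_cancel₀ hDne hxy
  rw [hV, ← LinearEquiv.finrank_eq
    (Submodule.equivMapOfInjective _ hinj (homogeneousSubmodule (Fin 2) k (d - q - 1)))]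
  rw [Statement10Aux.finrank_homog]
  omega
end

section
/- Let g ∈ GL₂(𝔽_q) and let g act on k[X,Y] by the k-algebra homomorphism sending X to g₁₁·X + g₂₁·Y and Y to g₁₂·X + g₂₂·Y, where the matrix entries are viewed in k via the embedding 𝔽_q ⊆ k. Then g·(X^q·Y − X·Y^q) = det(g)·(X^q·Y − X·Y^q). -/
open MvPolynomial

/-- Let `F` be the field with `q` elements, `k` a field which is an
`F`-algebra and `g ∈ GL₂(F)`. Let `g` act on `k[X,Y]` by the `k`-algebra homomorphism
sending `X ↦ g₁₁·X + g₂₁·Y` and `Y ↦ g₁₂·X + g₂₂·Y` (entries viewed in `k`). Then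
`g·(X^q·Y − X·Y^q) = det(g)·(X^q·Y − X·Y^q)`. -/
theorem statement12 {F k : Type*} [Field F] [Fintype F] [Field k] [Algebra F k]
    {q : ℕ} (hq : Fintype.card F = q)
    (g : GL (Fin 2) F) :
    aeval
      ![C (algebraMap F k ((g : Matrix (Fin 2) (Fin 2) F) 0 0)) * X 0 +
          C (algebraMap F k ((g : Matrix (Fin 2) (Fin 2) F) 1 0)) * X 1,
        C (algebraMap F k ((g : Matrix (Fin 2) (Fin 2) F) 0 1)) * X 0 +
          C (algebraMap F k ((g : Matrix (Fin 2) (Fin 2) F) 1 1)) * X 1]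
      ((X 0 ^ q * X 1 - X 0 * X 1 ^ q : MvPolynomial (Fin 2) k))
    = C (algebraMap F k (g : Matrix (Fin 2) (Fin 2) F).det) *
        (X 0 ^ q * X 1 - X 0 * X 1 ^ q) := by
  have hinj : Function.Injective (algebraMap F k) := (algebraMap F k).injective
  obtain ⟨n, hp, hcard⟩ := FiniteField.card F (ringChar F)
  haveI : Fact (Nat.Prime (ringChar F)) := ⟨hp⟩
  haveI : CharP k (ringChar F) := charP_of_injective_algebraMap hinj (ringChar F)
  have key : ∀ (a b : F),
      (C (algebraMap F k a) * X (0:ℕ) + C (algebraMap F k b) * X (1:ℕ) :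
        MvPolynomial ℕ k) ^ q
      = C (algebraMap F k a) * X 0 ^ q + C (algebraMap F k b) * X 1 ^ q := by
    intro a b
    subst hq
    rw [hcard, add_pow_char_pow, mul_pow, mul_pow, ← C_pow, ← C_pow, ← map_pow, ← map_pow,
      ← hcard, FiniteField.pow_card, FiniteField.pow_card]
  simp only [map_sub, map_mul, map_pow, aeval_X, Matrix.cons_val_zero, Matrix.cons_val_one,
    Matrix.head_cons]
  simp only [key]
  rw [Matrix.det_fin_two]
  simp only [map_sub, map_mul]
  ring
end

section
/- Let A be the localization of the ring k[X,Y]/(XY) away from the image of (X^{q−1} − 1)(Y^{q−1} − 1). For each b ∈ 𝔽_q^× the images of X − b and of Y − b in A are units, and the group homomorphism from k^× × (𝔽_q^× → ℤ) × (𝔽_q^× → ℤ) to A^× sending (c, m, n) to c · ∏_{b ∈ 𝔽_q^×} (X − b)^{m(b)} · ∏_{b ∈ 𝔽_q^×} (Y − b)^{n(b)} is an isomorphism of abelian groups. -/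
set_option linter.unusedSectionVars false
set_option maxHeartbeats 1000000

section AuxPoly
open Polynomial


variable {k : Type*} [Field k] {ι : Type*} [Fintype ι] [DecidableEq ι]

/-- root multiplicity of a product of powers of distinct linear factors -/
lemma aux_rm (r : ι → k) (hr : Function.Injective r) (t : ι → ℕ) (b₀ : ι) :
    rootMultiplicity (r b₀) (∏ b : ι, (X - C (r b)) ^ t b) = t b₀ := by
  classical
  have hne : ∀ b : ι, ((X : k[X]) - C (r b)) ^ t b ≠ 0 :=
    fun b => pow_ne_zero _ (X_sub_C_ne_zero _)
  rw [← Finset.mul_prod_erase Finset.univ _ (Finset.mem_univ b₀)]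
  rw [rootMultiplicity_mul (by
    exact mul_ne_zero (hne b₀) (Finset.prod_ne_zero_iff.2 fun b _ => hne b))]
  rw [rootMultiplicity_X_sub_C_pow]
  have : rootMultiplicity (r b₀) (∏ b ∈ Finset.univ.erase b₀, (X - C (r b)) ^ t b) = 0 := by
    apply rootMultiplicity_eq_zero
    intro h
    rw [IsRoot, eval_prod] at h
    obtain ⟨b, hb, hb0⟩ := Finset.prod_eq_zero_iff.1 h
    rw [eval_pow, eval_sub, eval_X, eval_C] at hb0
    have : r b₀ - r b = 0 := by
      by_contra hne'
      exact (pow_ne_zero _ hne') hb0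
    have hbb : r b = r b₀ := (sub_eq_zero.1 this).symm
    exact (Finset.mem_erase.1 hb).1 (hr hbb)
  omega

/-- classification of divisors of powers of a squarefree split polynomial -/
lemma aux_cl (r : ι → k) (hr : Function.Injective r) (p : k[X]) (hp : p ≠ 0) (T : ℕ)
    (hdvd : p ∣ (∏ b : ι, (X - C (r b))) ^ T) :
    p = C p.leadingCoeff * ∏ b : ι, (X - C (r b)) ^ p.rootMultiplicity (r b) := by
  classical
  have hprodne : (∏ b : ι, ((X : k[X]) - C (r b))) ^ T ≠ 0 :=
    pow_ne_zero _ (Finset.prod_ne_zero_iff.2 fun b _ => X_sub_C_ne_zero _)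
  have hsp : p.Splits :=
    Splits.of_dvd
      ((Splits.prod fun b _ => Splits.X_sub_C _).pow _) hprodne hdvd
  have hroots : ∀ a ∈ p.roots, ∃ b, r b = a := by
    intro a ha
    have hev : eval a p = 0 := (mem_roots hp).1 ha
    obtain ⟨c, hc⟩ := hdvd
    have : eval a ((∏ b : ι, (X - C (r b))) ^ T) = 0 := by
      rw [hc, eval_mul, hev, zero_mul]
    have hT : T ≠ 0 := by
      rintro rfl
      simp at this
    rw [eval_pow, pow_eq_zero_iff hT, eval_prod] at this
    obtain ⟨b, _, hb⟩ := Finset.prod_eq_zero_iff.1 this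
    rw [eval_sub, eval_X, eval_C] at hb
    exact ⟨b, (sub_eq_zero.1 hb).symm⟩
  have h1 := hsp.eq_prod_roots
  conv_lhs => rw [h1]
  congr 1
  rw [Finset.prod_multiset_map_count]
  have hsub : p.roots.toFinset ⊆ Finset.univ.image r := by
    intro a ha
    obtain ⟨b, hb⟩ := hroots a (Multiset.mem_toFinset.1 ha)
    exact Finset.mem_image.2 ⟨b, Finset.mem_univ _, hb⟩
  rw [Finset.prod_subset hsub (by
    intro x _ hx
    rw [Multiset.count_eq_zero.2 (fun h => hx (Multiset.mem_toFinset.2 h)), pow_zero])]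
  rw [Finset.prod_image (fun x _ y _ h => hr h)]
  simp_rw [count_roots]





/-- if a zpow-product of distinct linear factors is constant in RatFunc, all exponents vanish -/
lemma aux_L1 (r : ι → k) (hr : Function.Injective r) (e : ι → ℤ) (γ : k)
    (h : ∏ b : ι, (algebraMap k[X] (RatFunc k) (X - C (r b))) ^ e b
        = algebraMap k[X] (RatFunc k) (C γ)) :
    (∀ b, e b = 0) ∧ γ = 1 := by
  classical
  set ι' := algebraMap k[X] (RatFunc k)
  have hne : ∀ b : ι, ι' (X - C (r b)) ≠ 0 := fun b =>
    RatFunc.algebraMap_ne_zero (X_sub_C_ne_zero _)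
  have key : ∀ b : ι, ι' (X - C (r b)) ^ e b * ι' (X - C (r b)) ^ ((-e b).toNat)
      = ι' (X - C (r b)) ^ ((e b).toNat) := by
    intro b
    rw [← zpow_natCast (ι' (X - C (r b))) ((-e b).toNat),
      ← zpow_add₀ (hne b), ← zpow_natCast (ι' (X - C (r b))) ((e b).toNat)]
    congr 1
    omega
  have h2 : ι' (C γ) * ∏ b : ι, ι' (X - C (r b)) ^ ((-e b).toNat)
      = ∏ b : ι, ι' (X - C (r b)) ^ ((e b).toNat) := by
    rw [← h, ← Finset.prod_mul_distrib]
    exact Finset.prod_congr rfl fun b _ => key b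
  have h3 : C γ * ∏ b : ι, (X - C (r b)) ^ ((-e b).toNat)
      = ∏ b : ι, (X - C (r b)) ^ ((e b).toNat) := by
    apply RatFunc.algebraMap_injective
    simp only [map_mul, map_prod, map_pow]
    exact h2
  have hγ : γ ≠ 0 := by
    intro h0
    rw [h0, map_zero, zero_mul] at h3
    exact (Finset.prod_ne_zero_iff.2 fun b _ =>
      pow_ne_zero _ (X_sub_C_ne_zero (r b))) h3.symm
  have he : ∀ b, e b = 0 := by
    intro b₀
    have hL := congrArg (rootMultiplicity (r b₀)) h3
    rw [rootMultiplicity_mul (by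
        exact mul_ne_zero (fun hc => hγ (by simpa using congrArg (coeff · 0) hc))
          (Finset.prod_ne_zero_iff.2 fun b _ => pow_ne_zero _ (X_sub_C_ne_zero _)))] at hL
    rw [rootMultiplicity_C, zero_add, aux_rm r hr _ b₀, aux_rm r hr _ b₀] at hL
    omega
  refine ⟨he, ?_⟩
  simp only [he, zpow_zero, Finset.prod_const_one] at h
  have : (C γ : k[X]) = C 1 := by
    apply RatFunc.algebraMap_injective
    simp only [map_one]
    exact h.symm
  exact C_injective (by simpa using this)



lemma aux_fact0 (F : Type*) [Field F] [Fintype F] [DecidableEq F] :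
    ∏ b : Fˣ, (X - C (b : F)) = X ^ (Fintype.card F - 1) - 1 := by
  classical
  set q := Fintype.card F with hqdef
  have hq1 : 1 < q := Fintype.one_lt_card
  have hmonic : Monic (X ^ q - X : F[X]) :=
    monic_X_pow_sub (by rw [degree_X]; exact_mod_cast hq1)
  have hdeg : (X ^ q - X : F[X]).natDegree = q :=
    FiniteField.X_pow_card_sub_X_natDegree_eq F hq1
  have hroots : (X ^ q - X : F[X]).roots = (Finset.univ : Finset F).val :=
    FiniteField.roots_X_pow_card_sub_X F
  have hsplits : Splits (X ^ q - X : F[X]) := by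
    rw [splits_iff_card_roots, hroots, hdeg]
    simp [hqdef]
  have hbig : (X ^ q - X : F[X]) = ∏ a : F, (X - C a) := by
    have := hsplits.eq_prod_roots_of_monic hmonic
    rw [hroots] at this
    rw [this]
    rfl
  have hsplit0 : ∏ a : F, (X - C a) = (X - C (0 : F)) * ∏ a ∈ Finset.univ.erase 0, (X - C a) :=
    (Finset.mul_prod_erase Finset.univ _ (Finset.mem_univ 0)).symm
  have hunits : ∏ a ∈ Finset.univ.erase (0 : F), (X - C a) = ∏ b : Fˣ, (X - C (b : F)) := by
    refine (Finset.prod_bij (fun (b : Fˣ) _ => (b : F)) ?_ ?_ ?_ ?_).symm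
    · intro b _
      exact Finset.mem_erase.2 ⟨Units.ne_zero b, Finset.mem_univ _⟩
    · intro b _ b' _ h
      exact Units.ext h
    · intro a ha
      have ha0 : a ≠ 0 := (Finset.mem_erase.1 ha).1
      exact ⟨(Ne.isUnit ha0).unit, Finset.mem_univ _, ((Ne.isUnit ha0).unit_spec).symm⟩
    · intro b _
      rfl
  have hq' : q - 1 + 1 = q := by omega
  have hfac : (X ^ q - X : F[X]) = X * (X ^ (q - 1) - 1) := by
    rw [mul_sub, mul_one, ← pow_succ', hq']
  apply mul_left_cancel₀ (X_ne_zero : (X : F[X]) ≠ 0)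
  rw [← hfac, hbig, hsplit0, hunits, map_zero, sub_zero]

lemma aux_fact1 {F k : Type*} [Field F] [Fintype F] [DecidableEq F] [Field k] [Algebra F k] :
    ∏ b : Fˣ, (X - C (algebraMap F k (b : F))) = X ^ (Fintype.card F - 1) - 1 := by
  have h := congrArg (Polynomial.map (algebraMap F k)) (aux_fact0 F)
  rw [Polynomial.map_prod] at h
  simp only [Polynomial.map_sub, Polynomial.map_pow, Polynomial.map_X, Polynomial.map_one,
    Polynomial.map_C] at h
  exact h

end AuxPoly

section AuxMv

open MvPolynomial

noncomputable def evXh (k : Type*) [CommRing k] :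
    MvPolynomial (Fin 2) k →ₐ[k] Polynomial k := aeval ![Polynomial.X, 0]

noncomputable def evYh (k : Type*) [CommRing k] :
    MvPolynomial (Fin 2) k →ₐ[k] Polynomial k := aeval ![0, Polynomial.X]

variable {k : Type*} [CommRing k]

@[simp] lemma evXh_X0 : evXh k (X 0) = Polynomial.X := by simp [evXh]
@[simp] lemma evXh_X1 : evXh k (X 1) = 0 := by simp [evXh]
@[simp] lemma evYh_X0 : evYh k (X 0) = 0 := by simp [evYh]
@[simp] lemma evYh_X1 : evYh k (X 1) = Polynomial.X := by simp [evYh]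
@[simp] lemma evXh_C (a : k) : evXh k (C a) = Polynomial.C a := by simp [evXh]
@[simp] lemma evYh_C (a : k) : evYh k (C a) = Polynomial.C a := by simp [evYh]

noncomputable def EXh (k : Type*) [CommRing k] :
    MvPolynomial (Fin 2) k →ₐ[k] MvPolynomial (Fin 2) k :=
  (Polynomial.aeval (X 0)).comp (evXh k)

noncomputable def EYh (k : Type*) [CommRing k] :
    MvPolynomial (Fin 2) k →ₐ[k] MvPolynomial (Fin 2) k :=
  (Polynomial.aeval (X 1)).comp (evYh k)

noncomputable def E0h (k : Type*) [CommRing k] :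
    MvPolynomial (Fin 2) k →ₐ[k] MvPolynomial (Fin 2) k :=
  (Algebra.ofId k _).comp (aeval ![0, 0])

@[simp] lemma EXh_X0 : EXh k (X 0) = X 0 := by simp [EXh]
@[simp] lemma EXh_X1 : EXh k (X 1) = 0 := by simp [EXh]
@[simp] lemma EYh_X0 : EYh k (X 0) = 0 := by simp [EYh]
@[simp] lemma EYh_X1 : EYh k (X 1) = X 1 := by simp [EYh]
@[simp] lemma E0h_X (i : Fin 2) : E0h k (X i) = 0 := by
  fin_cases i <;> simp [E0h, Algebra.ofId_apply]
@[simp] lemma EXh_C (a : k) : EXh k (C a) = C a := by simp [EXh]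
@[simp] lemma EYh_C (a : k) : EYh k (C a) = C a := by simp [EYh]
@[simp] lemma E0h_C (a : k) : E0h k (C a) = C a := by
  simp [E0h, Algebra.ofId_apply, algebraMap_eq]

lemma aux_S1 (p : MvPolynomial (Fin 2) k) : (X 1 : MvPolynomial (Fin 2) k) ∣ p - EXh k p := by
  induction p using MvPolynomial.induction_on with
  | C a => simp
  | add p q hp hq => have := dvd_add hp hq; rwa [show p - EXh k p + (q - EXh k q)
      = p + q - EXh k (p + q) by rw [map_add]; ring] at this
  | mul_X p i hp =>
    fin_cases i <;> simp only [Fin.zero_eta, Fin.mk_one]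
    · rw [map_mul, EXh_X0, show p * X 0 - EXh k p * X 0 = (p - EXh k p) * X 0 by ring]
      exact hp.mul_right _
    · rw [map_mul, EXh_X1, mul_zero, sub_zero]
      exact dvd_mul_left _ _

lemma aux_S2 (p : MvPolynomial (Fin 2) k) : (X 0 : MvPolynomial (Fin 2) k) ∣ p - EYh k p := by
  induction p using MvPolynomial.induction_on with
  | C a => simp
  | add p q hp hq => have := dvd_add hp hq; rwa [show p - EYh k p + (q - EYh k q)
      = p + q - EYh k (p + q) by rw [map_add]; ring] at this
  | mul_X p i hp =>
    fin_cases i <;> simp only [Fin.zero_eta, Fin.mk_one]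
    · rw [map_mul, EYh_X0, mul_zero, sub_zero]
      exact dvd_mul_left _ _
    · rw [map_mul, EYh_X1, show p * X 1 - EYh k p * X 1 = (p - EYh k p) * X 1 by ring]
      exact hp.mul_right _

lemma aux_D (p : MvPolynomial (Fin 2) k) :
    (X 0 * X 1 : MvPolynomial (Fin 2) k) ∣ p - EXh k p - EYh k p + E0h k p := by
  induction p using MvPolynomial.induction_on with
  | C a => simp
  | add p q hp hq => have := dvd_add hp hq; rwa [show
      (p - EXh k p - EYh k p + E0h k p) + (q - EXh k q - EYh k q + E0h k q)
      = p + q - EXh k (p + q) - EYh k (p + q) + E0h k (p + q) by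
        simp only [map_add]; ring] at this
  | mul_X p i _ =>
    fin_cases i <;> simp only [Fin.zero_eta, Fin.mk_one]
    · rw [map_mul, map_mul, map_mul, EXh_X0, EYh_X0, E0h_X, mul_zero, mul_zero,
        sub_zero, add_zero, show p * X 0 - EXh k p * X 0 = X 0 * (p - EXh k p) by ring]
      exact mul_dvd_mul_left _ (aux_S1 p)
    · rw [map_mul, map_mul, map_mul, EXh_X1, EYh_X1, E0h_X, mul_zero, mul_zero,
        sub_zero, add_zero, show p * X 1 - EYh k p * X 1
          = X 1 * (p - EYh k p) by ring, mul_comm (X 0) (X 1)]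
      exact mul_dvd_mul_left _ (aux_S2 p)

lemma aux_div {kk : Type*} [CommRing kk] (p : MvPolynomial (Fin 2) kk)
    (h1 : evXh kk p = 0) (h2 : evYh kk p = 0) :
    (X 0 * X 1 : MvPolynomial (Fin 2) kk) ∣ p := by
  have hE0 : (aeval ![0, 0] : MvPolynomial (Fin 2) kk →ₐ[kk] kk)
      = (Polynomial.aeval (0 : kk)).comp (evXh kk) := by
    apply MvPolynomial.algHom_ext
    intro i
    fin_cases i <;> simp
  have h0 : E0h kk p = 0 := by
    rw [E0h, AlgHom.comp_apply, hE0, AlgHom.comp_apply, h1, map_zero, map_zero]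
  have hEX : EXh kk p = 0 := by rw [EXh, AlgHom.comp_apply, h1, map_zero]
  have hEY : EYh kk p = 0 := by rw [EYh, AlgHom.comp_apply, h2, map_zero]
  have := aux_D p
  rwa [hEX, hEY, h0, sub_zero, sub_zero, add_zero] at this

lemma aux_eval00 {kk : Type*} [CommRing kk] (p : MvPolynomial (Fin 2) kk) :
    Polynomial.eval 0 (evXh kk p) = Polynomial.eval 0 (evYh kk p) := by
  have h : (Polynomial.aeval (0 : kk)).comp (evXh kk)
      = (Polynomial.aeval (0 : kk)).comp (evYh kk) := by
    apply MvPolynomial.algHom_ext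
    intro i
    fin_cases i <;> simp
  have := DFunLike.congr_fun h p
  simpa using this

end AuxMv


open MvPolynomial

/-- Let `F` be the field with `q` elements, `k` a field which is an
`F`-algebra, `S = k[X,Y]/(XY)` and `A` the localization of `S` away from the image of
`(X^{q−1} − 1)(Y^{q−1} − 1)`. For each `b ∈ F^×` the images of `X − b` and `Y − b` in
`A` are units, and the map `k^× × (F^× → ℤ) × (F^× → ℤ) → A^×`,
`(c, m, n) ↦ c · ∏_b (X − b)^{m b} · ∏_b (Y − b)^{n b}`, is an isomorphism of abelian
groups (the source carrying the product group structure, `k^×` multiplicative and the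
function groups additive). -/
theorem statement16 {F k : Type*} [Field F] [Fintype F] [DecidableEq F] [Field k]
    [Algebra F k] {q : ℕ} (hq : Fintype.card F = q) :
    ∀ (S : Type _) (_ : CommRing S)
      (π : MvPolynomial (Fin 2) k →+* S),
      Function.Surjective π →
      RingHom.ker π = Ideal.span {(X 0 * X 1 : MvPolynomial (Fin 2) k)} →
      ∀ (A : Type _) (_ : CommRing A) (_ : Algebra S A),
        IsLocalization.Away (π ((X 0 ^ (q - 1) - 1) * (X 1 ^ (q - 1) - 1))) A →
        ∃ (ux uy : Fˣ → Aˣ) (w : kˣ → Aˣ),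
          (∀ b : Fˣ, (ux b : A) =
              algebraMap S A (π (X 0 - C (algebraMap F k (b : F))))) ∧
          (∀ b : Fˣ, (uy b : A) =
              algebraMap S A (π (X 1 - C (algebraMap F k (b : F))))) ∧
          (∀ c : kˣ, (w c : A) = algebraMap S A (π (C (c : k)))) ∧
          (∀ (c c' : kˣ) (m m' n n' : Fˣ → ℤ),
              w (c * c') * (∏ b : Fˣ, ux b ^ (m b + m' b)) *
                  (∏ b : Fˣ, uy b ^ (n b + n' b)) =
                (w c * (∏ b : Fˣ, ux b ^ m b) * ∏ b : Fˣ, uy b ^ n b) *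
                  (w c' * (∏ b : Fˣ, ux b ^ m' b) * ∏ b : Fˣ, uy b ^ n' b)) ∧
          Function.Bijective (fun t : kˣ × (Fˣ → ℤ) × (Fˣ → ℤ) =>
            w t.1 * (∏ b : Fˣ, ux b ^ t.2.1 b) * ∏ b : Fˣ, uy b ^ t.2.2 b) := by
  intro S iS π hπ hker A iA ialg hloc
  classical
  haveI := hloc
  have hq2 : 1 < q := hq ▸ Fintype.one_lt_card
  set f₀ : MvPolynomial (Fin 2) k := (X 0 ^ (q - 1) - 1) * (X 1 ^ (q - 1) - 1) with hf₀
  set φ : S →+* A := algebraMap S A with hφ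
  set bb : Fˣ → k := fun b => algebraMap F k (b : F) with hbb
  have hbbinj : Function.Injective bb := fun b b' h =>
    Units.ext ((algebraMap F k).injective h)
  have hbb0 : ∀ b, bb b ≠ 0 := fun b => by
    simp [hbb, (algebraMap F k).injective.eq_iff' (map_zero _), Units.ne_zero b]
  -- the product formula in k[X]
  have fact1 : ∏ b : Fˣ, (Polynomial.X - Polynomial.C (bb b))
      = Polynomial.X ^ (q - 1) - 1 := by
    have := aux_fact1 (F := F) (k := k)
    rwa [hq] at this
  -- product formulas in the MvPolynomial ring
  have factX : (∏ b : Fˣ, (X 0 - C (bb b)) : MvPolynomial (Fin 2) k) = X 0 ^ (q - 1) - 1 := by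
    have := congrArg (Polynomial.aeval (X 0 : MvPolynomial (Fin 2) k)) fact1
    simpa [MvPolynomial.algebraMap_eq] using this
  have factY : (∏ b : Fˣ, (X 1 - C (bb b)) : MvPolynomial (Fin 2) k) = X 1 ^ (q - 1) - 1 := by
    have := congrArg (Polynomial.aeval (X 1 : MvPolynomial (Fin 2) k)) fact1
    simpa [MvPolynomial.algebraMap_eq] using this
  have hdvdX : ∀ b : Fˣ, (X 0 - C (bb b) : MvPolynomial (Fin 2) k) ∣ f₀ := fun b => by
    rw [hf₀, ← factX]
    exact dvd_mul_of_dvd_left (Finset.dvd_prod_of_mem _ (Finset.mem_univ b)) _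
  have hdvdY : ∀ b : Fˣ, (X 1 - C (bb b) : MvPolynomial (Fin 2) k) ∣ f₀ := fun b => by
    rw [hf₀, ← factY]
    exact dvd_mul_of_dvd_right (Finset.dvd_prod_of_mem _ (Finset.mem_univ b)) _
  have hfu : IsUnit (φ (π f₀)) := IsLocalization.Away.algebraMap_isUnit (π f₀)
  have hux : ∀ b : Fˣ, IsUnit (φ (π (X 0 - C (bb b)))) := fun b =>
    isUnit_of_dvd_unit (map_dvd φ (map_dvd π (hdvdX b))) hfu
  have huy : ∀ b : Fˣ, IsUnit (φ (π (X 1 - C (bb b)))) := fun b =>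
    isUnit_of_dvd_unit (map_dvd φ (map_dvd π (hdvdY b))) hfu
  have hwc : ∀ c : kˣ, IsUnit (φ (π (C (c : k)))) := fun c =>
    c.isUnit.map ((φ.comp π).comp MvPolynomial.C)
  refine ⟨fun b => (hux b).unit, fun b => (huy b).unit, fun c => (hwc c).unit,
    fun b => (hux b).unit_spec, fun b => (huy b).unit_spec, fun c => (hwc c).unit_spec,
    ?_, ?_⟩
  · -- homomorphism property
    intro c c' m m' n n'
    have hwmul : (hwc (c * c')).unit = (hwc c).unit * (hwc c').unit := by
      apply Units.ext
      simp only [IsUnit.unit_spec, Units.val_mul, Units.val_mul, ← map_mul]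
    beta_reduce
    rw [hwmul]
    simp_rw [zpow_add]
    rw [Finset.prod_mul_distrib, Finset.prod_mul_distrib]
    ac_rfl
  · -- bijectivity
    have hgne : (Polynomial.X ^ (q - 1) - 1 : Polynomial k) ≠ 0 := by
      have := Polynomial.X_pow_sub_C_ne_zero (R := k) (by omega : 0 < q - 1) 1
      simpa using this
    set ιP : Polynomial k →+* RatFunc k := algebraMap (Polynomial k) (RatFunc k) with hιPdef
    have hevXf₀ : evXh k f₀ = -(Polynomial.X ^ (q - 1) - 1) := by
      rw [hf₀]
      simp [zero_pow (show q - 1 ≠ 0 by omega)]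
    have hevYf₀ : evYh k f₀ = -(Polynomial.X ^ (q - 1) - 1) := by
      rw [hf₀]
      simp [zero_pow (show q - 1 ≠ 0 by omega)]
    have hexΦ : ∀ ev : MvPolynomial (Fin 2) k →ₐ[k] Polynomial k,
        ev (X 0) * ev (X 1) = 0 → IsUnit (ιP (ev f₀)) →
        ∃ Φ : A →+* RatFunc k, ∀ p, Φ (φ (π p)) = ιP (ev p) := by
      intro ev hev01 hevu
      have hkerle : ∀ p ∈ RingHom.ker π, (ιP.comp ev.toRingHom) p = 0 := by
        intro p hp
        rw [hker, Ideal.mem_span_singleton] at hp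
        obtain ⟨s0, rfl⟩ := hp
        have hz : ev (X 0 * X 1 * s0) = 0 := by
          rw [map_mul, map_mul, hev01, zero_mul]
        simp only [RingHom.coe_comp, Function.comp_apply, AlgHom.toRingHom_eq_coe,
          AlgHom.coe_toRingHom, hz, map_zero]
      set e := RingHom.quotientKerEquivOfSurjective hπ with hedef
      set L := Ideal.Quotient.lift (RingHom.ker π) (ιP.comp ev.toRingHom) hkerle with hLdef
      set ψ : S →+* RatFunc k := L.comp e.symm.toRingHom with hψdef
      have hψ : ∀ p, ψ (π p) = ιP (ev p) := by
        intro p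
        have he : e (Ideal.Quotient.mk (RingHom.ker π) p) = π p := by
          rw [hedef]
          exact RingHom.kerLift_mk π p
        have he2 : e.symm (π p) = Ideal.Quotient.mk (RingHom.ker π) p := by
          rw [← he, RingEquiv.symm_apply_apply]
        simp only [hψdef, RingHom.coe_comp, Function.comp_apply, RingEquiv.toRingHom_eq_coe,
          RingEquiv.coe_toRingHom]
        rw [he2, hLdef]
        exact Ideal.Quotient.lift_mk _ _ _
      have hψu : IsUnit (ψ (π f₀)) := by rw [hψ]; exact hevu
      exact ⟨IsLocalization.Away.lift (π f₀) hψu,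
        fun p => by rw [IsLocalization.Away.lift_eq (π f₀) hψu (π p)]; exact hψ p⟩
    have huX : IsUnit (ιP (evXh k f₀)) := by
      rw [hevXf₀]
      exact isUnit_iff_ne_zero.2 (RatFunc.algebraMap_ne_zero (neg_ne_zero.2 hgne))
    have huY : IsUnit (ιP (evYh k f₀)) := by
      rw [hevYf₀]
      exact isUnit_iff_ne_zero.2 (RatFunc.algebraMap_ne_zero (neg_ne_zero.2 hgne))
    obtain ⟨ΦX, hΦX⟩ := hexΦ (evXh k) (by simp) huX
    obtain ⟨ΦY, hΦY⟩ := hexΦ (evYh k) (by simp) huY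
    -- injectivity of the pair (ΦX, ΦY) on A
    have hpairinj : ∀ a a' : A, ΦX a = ΦX a' → ΦY a = ΦY a' → a = a' := by
      intro a a' h1 h2
      obtain ⟨⟨s, t⟩, hst⟩ := IsLocalization.surj (Submonoid.powers (π f₀)) (a - a')
      obtain ⟨p, hp⟩ := hπ s
      rw [← hp] at hst
      have hX0 : ιP (evXh k p) = 0 := by
        rw [← hΦX, ← hst, map_mul, map_sub, h1, sub_self, zero_mul]
      have hY0 : ιP (evYh k p) = 0 := by
        rw [← hΦY, ← hst, map_mul, map_sub, h2, sub_self, zero_mul]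
      have hdvd := aux_div p
        ((map_eq_zero_iff ιP (RatFunc.algebraMap_injective k)).1 hX0)
        ((map_eq_zero_iff ιP (RatFunc.algebraMap_injective k)).1 hY0)
      have hπp : π p = 0 := by
        rw [← RingHom.mem_ker, hker, Ideal.mem_span_singleton]
        exact hdvd
      rw [hπp, map_zero] at hst
      have htu : IsUnit (φ (t : S)) := IsLocalization.map_units A t
      have h0 : a - a' = 0 := by
        exact (htu.mul_left_eq_zero).1 hst
      exact sub_eq_zero.1 h0
    -- value computation helpers
    have hvalwx : ∀ (Φ : A →+* RatFunc k) (c : kˣ) (m n : Fˣ → ℤ),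
        Φ ((((hwc c).unit * (∏ b : Fˣ, (hux b).unit ^ m b) *
            ∏ b : Fˣ, (huy b).unit ^ n b : Aˣ) : A))
        = Φ (φ (π (C (c : k)))) * (∏ b : Fˣ, Φ (φ (π (X 0 - C (bb b)))) ^ m b)
          * ∏ b : Fˣ, Φ (φ (π (X 1 - C (bb b)))) ^ n b := by
      intro Φ c m n
      have h1 : ∀ u : Aˣ, Φ (u : A)
          = ((Units.map Φ.toMonoidHom u : (RatFunc k)ˣ) : RatFunc k) := fun u => rfl
      rw [h1, map_mul, map_mul, map_prod, map_prod]
      simp_rw [MonoidHom.map_zpow]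
      rw [Units.val_mul, Units.val_mul, Units.coe_prod, Units.coe_prod]
      simp_rw [Units.val_zpow_eq_zpow_val]
      simp only [Units.coe_map, MonoidHom.coe_coe, IsUnit.unit_spec]
      rfl
    set ξ : Fˣ → RatFunc k := fun b => ιP (Polynomial.X - Polynomial.C (bb b)) with hξdef
    have hξ0 : ∀ b, ξ b ≠ 0 := fun b =>
      RatFunc.algebraMap_ne_zero (Polynomial.X_sub_C_ne_zero _)
    set ρ : k →+* RatFunc k := ιP.comp Polynomial.C with hρdef
    have hρ0 : ∀ x : k, x ≠ 0 → ρ x ≠ 0 := fun x h => by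
      simpa using RatFunc.algebraMap_ne_zero (Polynomial.C_ne_zero.2 h)
    set β : (Fˣ → ℤ) → k := fun nn => ∏ b : Fˣ, (-(bb b)) ^ (nn b) with hβdef
    have hβ0 : ∀ nn, β nn ≠ 0 := fun nn =>
      Finset.prod_ne_zero_iff.2 fun b _ => zpow_ne_zero _ (neg_ne_zero.2 (hbb0 b))
    have hρβ : ∀ nn : Fˣ → ℤ, ∏ b : Fˣ, (ρ (-(bb b))) ^ (nn b) = ρ (β nn) := by
      intro nn
      rw [hβdef, map_prod]
      exact Finset.prod_congr rfl fun b _ => (map_zpow₀ ρ _ _).symm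
    have hΦXw : ∀ c : kˣ, ΦX (φ (π (C (c : k)))) = ρ (c : k) := by
      intro c; rw [hΦX]; simp [hρdef]
    have hΦXx : ∀ b, ΦX (φ (π (X 0 - C (bb b)))) = ξ b := by
      intro b; rw [hΦX]; simp [hξdef]
    have hΦXy : ∀ b, ΦX (φ (π (X 1 - C (bb b)))) = ρ (-(bb b)) := by
      intro b; rw [hΦX]; simp [hρdef]
    have hΦYw : ∀ c : kˣ, ΦY (φ (π (C (c : k)))) = ρ (c : k) := by
      intro c; rw [hΦY]; simp [hρdef]
    have hΦYy : ∀ b, ΦY (φ (π (X 1 - C (bb b)))) = ξ b := by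
      intro b; rw [hΦY]; simp [hξdef]
    have hΦYx : ∀ b, ΦY (φ (π (X 0 - C (bb b)))) = ρ (-(bb b)) := by
      intro b; rw [hΦY]; simp [hρdef]
    have himgX : ∀ (c : kˣ) (m n : Fˣ → ℤ),
        ΦX ((((hwc c).unit * (∏ b : Fˣ, (hux b).unit ^ m b) *
            ∏ b : Fˣ, (huy b).unit ^ n b : Aˣ) : A))
        = ρ (c : k) * (∏ b : Fˣ, ξ b ^ m b) * ρ (β n) := by
      intro c m n
      rw [hvalwx ΦX c m n, hΦXw]
      rw [show (∏ b : Fˣ, ΦX (φ (π (X 0 - C (bb b)))) ^ m b) = ∏ b : Fˣ, ξ b ^ m b from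
        Finset.prod_congr rfl fun b _ => by rw [hΦXx]]
      rw [show (∏ b : Fˣ, ΦX (φ (π (X 1 - C (bb b)))) ^ n b) = ρ (β n) from by
        rw [← hρβ]; exact Finset.prod_congr rfl fun b _ => by rw [hΦXy]]
    have himgY : ∀ (c : kˣ) (m n : Fˣ → ℤ),
        ΦY ((((hwc c).unit * (∏ b : Fˣ, (hux b).unit ^ m b) *
            ∏ b : Fˣ, (huy b).unit ^ n b : Aˣ) : A))
        = ρ (c : k) * ρ (β m) * ∏ b : Fˣ, ξ b ^ n b := by
      intro c m n
      rw [hvalwx ΦY c m n, hΦYw]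
      rw [show (∏ b : Fˣ, ΦY (φ (π (X 0 - C (bb b)))) ^ m b) = ρ (β m) from by
        rw [← hρβ]; exact Finset.prod_congr rfl fun b _ => by rw [hΦYx]]
      rw [show (∏ b : Fˣ, ΦY (φ (π (X 1 - C (bb b)))) ^ n b) = ∏ b : Fˣ, ξ b ^ n b from
        Finset.prod_congr rfl fun b _ => by rw [hΦYy]]
    have hprodne : ∀ (e : Fˣ → ℤ), (∏ b : Fˣ, ξ b ^ e b) ≠ 0 := fun e =>
      Finset.prod_ne_zero_iff.2 fun b _ => zpow_ne_zero _ (hξ0 b)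
    have key : ∀ (u u' : kˣ) (e e' z z' : Fˣ → ℤ → ℤ) , True := fun _ _ _ _ _ _ => trivial
    have keyX : ∀ (u u' : kˣ) (e e' : Fˣ → ℤ) (z z' : Fˣ → ℤ),
        ρ (u : k) * (∏ b : Fˣ, ξ b ^ e b) * ρ (β z)
          = ρ (u' : k) * (∏ b : Fˣ, ξ b ^ e' b) * ρ (β z') →
        e = e' ∧ (u : k) * β z = (u' : k) * β z' := by
      intro u u' e e' z z' heq
      have hγ : ∏ b : Fˣ, ξ b ^ (e b - e' b)
          = ρ (((u' : k) * β z') / ((u : k) * β z)) := by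
        simp_rw [zpow_sub₀ (hξ0 _)]
        rw [Finset.prod_div_distrib, map_div₀, map_mul, map_mul]
        rw [div_eq_div_iff (hprodne e') (by
          exact mul_ne_zero (hρ0 _ (Units.ne_zero u)) (hρ0 _ (hβ0 z)))]
        linear_combination heq
      obtain ⟨he0, hγ1⟩ := aux_L1 bb hbbinj (fun b => e b - e' b)
        (((u' : k) * β z') / ((u : k) * β z)) hγ
      refine ⟨funext fun b => by have := he0 b; omega, ?_⟩
      have := (div_eq_one_iff_eq (mul_ne_zero (Units.ne_zero u) (hβ0 z))).1 hγ1
      exact this.symm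
    constructor
    · -- injectivity
      rintro ⟨c, m, n⟩ ⟨c', m', n'⟩ h
      simp only at h
      have hx := congrArg (fun u : Aˣ => ΦX (u : A)) h
      have hy := congrArg (fun u : Aˣ => ΦY (u : A)) h
      rw [himgX c m n, himgX c' m' n'] at hx
      rw [himgY c m n, himgY c' m' n'] at hy
      obtain ⟨hm, hcn⟩ := keyX c c' m m' n n' hx
      have hy2 : ρ (c : k) * (∏ b : Fˣ, ξ b ^ n b) * ρ (β m)
          = ρ (c' : k) * (∏ b : Fˣ, ξ b ^ n' b) * ρ (β m') := by
        linear_combination hy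
      obtain ⟨hn, hcm⟩ := keyX c c' n n' m m' hy2
      have hcc : (c : k) = (c' : k) := by
        rw [hm] at hcm
        exact mul_right_cancel₀ (hβ0 m') hcm
      simp only [Prod.mk.injEq]
      exact ⟨Units.ext hcc, hm, hn⟩
    · -- surjectivity
      intro u
      obtain ⟨⟨s, t⟩, hst⟩ := IsLocalization.surj (Submonoid.powers (π f₀)) ((u : Aˣ) : A)
      obtain ⟨p, hp⟩ := hπ s
      obtain ⟨N, hN⟩ := t.2
      rw [← hp, ← hN, map_pow] at hst
      -- hst : ↑u * φ (π f₀) ^ N = φ (π p)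
      have hupu : IsUnit (φ (π p)) := hst ▸ (u.isUnit.mul (hfu.pow N))
      obtain ⟨⟨s', t'⟩, hst'⟩ := IsLocalization.surj (Submonoid.powers (π f₀))
        ((hupu.unit⁻¹ : Aˣ) : A)
      obtain ⟨p', hp'⟩ := hπ s'
      obtain ⟨M, hM⟩ := t'.2
      rw [← hp', ← hM, map_pow] at hst'
      have hpp' : φ (π (p * p')) = φ (π (f₀ ^ M)) := by
        calc φ (π (p * p')) = φ (π p) * φ (π p') := by rw [map_mul, map_mul]
          _ = φ (π p) * ((hupu.unit⁻¹ : Aˣ) * φ (π f₀) ^ M) := by rw [hst']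
          _ = ((hupu.unit : Aˣ) * (hupu.unit⁻¹ : Aˣ)) * φ (π f₀) ^ M := by
              rw [hupu.unit_spec]; ring
          _ = φ (π f₀) ^ M := by simp [Units.mul_inv]
          _ = φ (π (f₀ ^ M)) := by rw [map_pow, map_pow]
      obtain ⟨cpow, hc⟩ := (IsLocalization.eq_iff_exists (Submonoid.powers (π f₀)) A).1 hpp'
      obtain ⟨L, hL⟩ := cpow.2
      have hL' : π f₀ ^ L = (cpow : S) := hL
      rw [← hL'] at hc
      have hkermem : f₀ ^ L * (p * p') - f₀ ^ (L + M) ∈ RingHom.ker π := by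
        rw [RingHom.mem_ker, map_sub, sub_eq_zero, map_mul, map_pow, hc, ← map_pow,
          ← map_mul, ← pow_add]
      rw [hker, Ideal.mem_span_singleton] at hkermem
      obtain ⟨s0, hs0⟩ := hkermem
      set g1 : Polynomial k := Polynomial.X ^ (q - 1) - 1 with hg1def
      -- push the relation through evXh and evYh
      have hXeq : (-g1) ^ L * (evXh k p * evXh k p') = (-g1) ^ (L + M) := by
        have h1 := congrArg (evXh k) hs0
        simp only [map_sub, map_mul, map_pow, hevXf₀, evXh_X0, evXh_X1, mul_zero,
          zero_mul] at h1
        exact sub_eq_zero.1 h1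
      have hYeq : (-g1) ^ L * (evYh k p * evYh k p') = (-g1) ^ (L + M) := by
        have h1 := congrArg (evYh k) hs0
        simp only [map_sub, map_mul, map_pow, hevYf₀, evYh_X0, evYh_X1, mul_zero,
          zero_mul] at h1
        exact sub_eq_zero.1 h1
      have hgne1 : (g1 : Polynomial k) ≠ 0 := hgne
      have hpxne : evXh k p ≠ 0 := by
        intro h0
        rw [h0, zero_mul, mul_zero] at hXeq
        exact (pow_ne_zero (L + M) (neg_ne_zero.2 hgne1)) hXeq.symm
      have hpyne : evYh k p ≠ 0 := by
        intro h0
        rw [h0, zero_mul, mul_zero] at hYeq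
        exact (pow_ne_zero (L + M) (neg_ne_zero.2 hgne1)) hYeq.symm
      have hXdvd : evXh k p ∣ g1 ^ (L + M) := by
        have h1 : evXh k p ∣ (-g1) ^ (L + M) :=
          ⟨evXh k p' * (-g1) ^ L, by linear_combination -hXeq⟩
        have h2 := h1.mul_left ((-1 : Polynomial k) ^ (L + M))
        rwa [show ((-1 : Polynomial k)) ^ (L + M) * (-g1) ^ (L + M) = g1 ^ (L + M) by
          rw [← mul_pow]; ring_nf] at h2
      have hYdvd : evYh k p ∣ g1 ^ (L + M) := by
        have h1 : evYh k p ∣ (-g1) ^ (L + M) :=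
          ⟨evYh k p' * (-g1) ^ L, by linear_combination -hYeq⟩
        have h2 := h1.mul_left ((-1 : Polynomial k) ^ (L + M))
        rwa [show ((-1 : Polynomial k)) ^ (L + M) * (-g1) ^ (L + M) = g1 ^ (L + M) by
          rw [← mul_pow]; ring_nf] at h2
      set cx : k := (evXh k p).leadingCoeff with hcxdef
      set cy : k := (evYh k p).leadingCoeff with hcydef
      set mx : Fˣ → ℕ := fun b => (evXh k p).rootMultiplicity (bb b) with hmxdef
      set ny : Fˣ → ℕ := fun b => (evYh k p).rootMultiplicity (bb b) with hnydef
      have hpxfac : evXh k p = Polynomial.C cx * ∏ b : Fˣ, (Polynomial.X -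
          Polynomial.C (bb b)) ^ mx b :=
        aux_cl bb hbbinj (evXh k p) hpxne (L + M) (by rw [fact1]; exact hXdvd)
      have hpyfac : evYh k p = Polynomial.C cy * ∏ b : Fˣ, (Polynomial.X -
          Polynomial.C (bb b)) ^ ny b :=
        aux_cl bb hbbinj (evYh k p) hpyne (L + M) (by rw [fact1]; exact hYdvd)
      have hcx0 : cx ≠ 0 := Polynomial.leadingCoeff_ne_zero.2 hpxne
      have hcy0 : cy ≠ 0 := Polynomial.leadingCoeff_ne_zero.2 hpyne
      -- matching constant terms
      set BX : k := ∏ b : Fˣ, (-(bb b)) ^ mx b with hBXdef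
      set BY : k := ∏ b : Fˣ, (-(bb b)) ^ ny b with hBYdef
      have hBX0 : BX ≠ 0 := Finset.prod_ne_zero_iff.2 fun b _ =>
        pow_ne_zero _ (neg_ne_zero.2 (hbb0 b))
      have hBY0 : BY ≠ 0 := Finset.prod_ne_zero_iff.2 fun b _ =>
        pow_ne_zero _ (neg_ne_zero.2 (hbb0 b))
      have hmatch : cx * BX = cy * BY := by
        have h1 := aux_eval00 p
        rw [hpxfac, hpyfac] at h1
        simpa [Polynomial.eval_prod, zero_sub] using h1
      -- splitting lemma for shifted exponents
      have hsplitgen : ∀ (K' : Type _) [Field K'], ∀ (x : Fˣ → K'), (∀ b, x b ≠ 0) →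
          ∀ (tt : Fˣ → ℕ), ∏ b : Fˣ, x b ^ ((tt b : ℤ) - (N : ℤ))
            = (∏ b : Fˣ, x b ^ tt b) / ((∏ b : Fˣ, x b) ^ N) := by
        intro K' _ x hx tt
        simp_rw [zpow_sub₀ (hx _)]
        rw [Finset.prod_div_distrib]
        congr 1
        · exact Finset.prod_congr rfl fun b _ => zpow_natCast _ _
        · rw [← Finset.prod_pow]
          exact Finset.prod_congr rfl fun b _ => zpow_natCast _ _
      set m'f : Fˣ → ℤ := fun b => (mx b : ℤ) - N with hm'def
      set n'f : Fˣ → ℤ := fun b => (ny b : ℤ) - N with hn'def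
      set D : k := ∏ b : Fˣ, (-(bb b)) with hDdef
      have hD0 : D ≠ 0 := Finset.prod_ne_zero_iff.2 fun b _ => neg_ne_zero.2 (hbb0 b)
      have hβm' : β m'f = BX / D ^ N := hsplitgen k _ (fun b => neg_ne_zero.2 (hbb0 b)) mx
      have hβn' : β n'f = BY / D ^ N := hsplitgen k _ (fun b => neg_ne_zero.2 (hbb0 b)) ny
      set c₀ : k := cx * (-1 : k) ^ N / β n'f with hc₀def
      have hc₀ne : c₀ ≠ 0 := div_ne_zero (mul_ne_zero hcx0 (pow_ne_zero _
        (neg_ne_zero.2 one_ne_zero))) (hβ0 n'f)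
      have hc₀n' : c₀ * β n'f = cx * (-1 : k) ^ N := div_mul_cancel₀ _ (hβ0 n'f)
      have hc₀m' : c₀ * β m'f = cy * (-1 : k) ^ N := by
        rw [hc₀def, hβm', hβn']
        field_simp
        linear_combination hmatch
      -- the candidate
      refine ⟨⟨Units.mk0 c₀ hc₀ne, m'f, n'f⟩, ?_⟩
      beta_reduce
      refine Units.ext (hpairinj _ _ ?_ ?_)
      · rw [himgX]
        have hXu : ΦX ((u : Aˣ) : A) * (ιP (evXh k f₀)) ^ N = ιP (evXh k p) := by
          have h1 := congrArg ΦX hst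
          rw [map_mul, map_pow, hΦX, hΦX] at h1
          exact h1
        have hQ0 : (∏ b : Fˣ, ξ b) ≠ 0 := Finset.prod_ne_zero_iff.2 fun b _ => hξ0 b
        have hQN0 : (ιP (evXh k f₀)) ^ N ≠ 0 := pow_ne_zero _ huX.ne_zero
        apply mul_right_cancel₀ hQN0
        rw [hXu]
        have hιg : ιP (evXh k f₀) = -∏ b : Fˣ, ξ b := by
          rw [hevXf₀, map_neg, ← fact1, map_prod]
        have hprodm' : (∏ b : Fˣ, ξ b ^ m'f b)
            = (∏ b : Fˣ, ξ b ^ mx b) / (∏ b : Fˣ, ξ b) ^ N := by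
          simp only [hm'def]
          exact hsplitgen _ ξ hξ0 mx
        have hkey : ρ c₀ * ρ (β n'f) = ρ cx * (-1 : RatFunc k) ^ N := by
          rw [← map_mul, hc₀n', map_mul, map_pow, map_neg, map_one]
        have hpx2 : ιP (evXh k p) = ρ cx * ∏ b : Fˣ, ξ b ^ mx b := by
          rw [hpxfac, map_mul, map_prod]
          simp_rw [map_pow]
          rfl
        calc ρ ((Units.mk0 c₀ hc₀ne : kˣ) : k) * (∏ b : Fˣ, ξ b ^ m'f b) * ρ (β n'f)
              * (ιP (evXh k f₀)) ^ N
            = (ρ c₀ * ρ (β n'f)) * ((∏ b : Fˣ, ξ b ^ mx b) / (∏ b : Fˣ, ξ b) ^ N)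
              * ((-1 : RatFunc k) ^ N * (∏ b : Fˣ, ξ b) ^ N) := by
              rw [Units.val_mk0, hprodm', hιg, neg_pow]; ring
          _ = ρ cx * (∏ b : Fˣ, ξ b ^ mx b) * ((-1 : RatFunc k) ^ N * (-1 : RatFunc k) ^ N)
              * ((∏ b : Fˣ, ξ b) ^ N / (∏ b : Fˣ, ξ b) ^ N) := by rw [hkey]; try ring
          _ = ρ cx * (∏ b : Fˣ, ξ b ^ mx b) := by
              have h2 : ((-1 : RatFunc k) ^ N * (-1 : RatFunc k) ^ N) = (1 : RatFunc k) := by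
                rw [← pow_add]; exact Even.neg_one_pow ⟨N, rfl⟩
              rw [h2, div_self (pow_ne_zero N hQ0)]
              ring
          _ = ιP (evXh k p) := hpx2.symm
      · rw [himgY]
        have hYu : ΦY ((u : Aˣ) : A) * (ιP (evYh k f₀)) ^ N = ιP (evYh k p) := by
          have h1 := congrArg ΦY hst
          rw [map_mul, map_pow, hΦY, hΦY] at h1
          exact h1
        have hQ0 : (∏ b : Fˣ, ξ b) ≠ 0 := Finset.prod_ne_zero_iff.2 fun b _ => hξ0 b
        have hQN0 : (ιP (evYh k f₀)) ^ N ≠ 0 := pow_ne_zero _ huY.ne_zero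
        apply mul_right_cancel₀ hQN0
        rw [hYu]
        have hιg : ιP (evYh k f₀) = -∏ b : Fˣ, ξ b := by
          rw [hevYf₀, map_neg, ← fact1, map_prod]
        have hprodn' : (∏ b : Fˣ, ξ b ^ n'f b)
            = (∏ b : Fˣ, ξ b ^ ny b) / (∏ b : Fˣ, ξ b) ^ N := by
          simp only [hn'def]
          exact hsplitgen _ ξ hξ0 ny
        have hkey : ρ c₀ * ρ (β m'f) = ρ cy * (-1 : RatFunc k) ^ N := by
          rw [← map_mul, hc₀m', map_mul, map_pow, map_neg, map_one]
        have hpy2 : ιP (evYh k p) = ρ cy * ∏ b : Fˣ, ξ b ^ ny b := by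
          rw [hpyfac, map_mul, map_prod]
          simp_rw [map_pow]
          rfl
        calc ρ ((Units.mk0 c₀ hc₀ne : kˣ) : k) * ρ (β m'f) * (∏ b : Fˣ, ξ b ^ n'f b)
              * (ιP (evYh k f₀)) ^ N
            = (ρ c₀ * ρ (β m'f)) * ((∏ b : Fˣ, ξ b ^ ny b) / (∏ b : Fˣ, ξ b) ^ N)
              * ((-1 : RatFunc k) ^ N * (∏ b : Fˣ, ξ b) ^ N) := by
              rw [Units.val_mk0, hprodn', hιg, neg_pow]; try ring
          _ = ρ cy * (∏ b : Fˣ, ξ b ^ ny b) * ((-1 : RatFunc k) ^ N * (-1 : RatFunc k) ^ N)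
              * ((∏ b : Fˣ, ξ b) ^ N / (∏ b : Fˣ, ξ b) ^ N) := by rw [hkey]; try ring
          _ = ρ cy * (∏ b : Fˣ, ξ b ^ ny b) := by
              have h2 : ((-1 : RatFunc k) ^ N * (-1 : RatFunc k) ^ N) = (1 : RatFunc k) := by
                rw [← pow_add]; exact Even.neg_one_pow ⟨N, rfl⟩
              rw [h2, div_self (pow_ne_zero N hQ0)]
              ring
          _ = ιP (evYh k p) := hpy2.symm
end
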